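/- arXiv:2507.11018 — 4 statements merged into one kernel-verified Lean document; each statement's English description precedes it below -/
import Mathlib

section
/- Uniqueness of the optimal contract: if (s,p) and (s′,p′) are both optimal contracts, then s_t = s′_t and p_t = p′_t for every t. -/
open Set Filter

/-- Principal's continuation value `Π_t(s,p) = Σ_{τ=t}^∞ δ^{τ−t}(π(s_τ) − p_τ)`. -/
noncomputable def PiVal (δ : ℝ) (π : ℝ → ℝ) (s p : ℕ → ℝ) (t : ℕ) : ℝ :=
  ∑' k : ℕ, δ ^ k * (π (s (t + k)) - p (t + k))

/-- Expert's continuation value `W_t(s,p) = Σ_{τ=t}^∞ δ^{τ−t}(w(s_τ) + p_τ)`. -/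
noncomputable def WVal (δ : ℝ) (w : ℝ → ℝ) (s p : ℕ → ℝ) (t : ℕ) : ℝ :=
  ∑' k : ℕ, δ ^ k * (w (s (t + k)) + p (t + k))

/-- A contract: `s` takes values in `[0,1]`, `s 0 = 0`, and `t ↦ δ^t·p_t` is summable. -/
def IsContract (δ : ℝ) (s p : ℕ → ℝ) : Prop :=
  (∀ t, s t ∈ Set.Icc (0 : ℝ) 1) ∧ s 0 = 0 ∧ Summable fun t => δ ^ t * p t

/-- Implementability: feasibility (monotone `s`, nonnegative `p`) plus (P-IC) and (E-IC). -/
def Implementable (δ : ℝ) (π w : ℝ → ℝ) (s p : ℕ → ℝ) : Prop :=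
  IsContract δ s p ∧ Monotone s ∧ (∀ t, 0 ≤ p t) ∧
  (∀ t, π (s t) / (1 - δ) ≤ PiVal δ π s p t) ∧
  (∀ t, w (s t) / (1 - δ) ≤ WVal δ w s p (t + 1))

/-- An optimal contract maximizes the principal's time-0 profit among implementable contracts. -/
def Optimal (δ : ℝ) (π w : ℝ → ℝ) (s p : ℕ → ℝ) : Prop :=
  Implementable δ π w s p ∧
  ∀ s' p' : ℕ → ℝ, Implementable δ π w s' p' → PiVal δ π s' p' 0 ≤ PiVal δ π s p 0

namespace OCU

/-- Discounted value of `F ∘ s` from time `t`. -/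
noncomputable def Gval (δ : ℝ) (F : ℝ → ℝ) (s : ℕ → ℝ) (t : ℕ) : ℝ :=
  ∑' k : ℕ, δ ^ k * F (s (t + k))

variable {δ : ℝ} {π w F : ℝ → ℝ} {s p x : ℕ → ℝ}

lemma summable_geom_of_bounded (hδ0 : 0 ≤ δ) (hδ1 : δ < 1) {a : ℕ → ℝ} {C : ℝ}
    (h : ∀ k, |a k| ≤ C) : Summable fun k => δ ^ k * a k := by
  apply Summable.of_norm_bounded
    ((summable_geometric_of_lt_one hδ0 hδ1).mul_left C)
  intro k
  rw [Real.norm_eq_abs, abs_mul, abs_pow, abs_of_nonneg hδ0, mul_comm]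
  exact mul_le_mul_of_nonneg_right (h k) (pow_nonneg hδ0 k)

lemma exists_bound (hF : ContinuousOn F (Set.Icc 0 1)) (hs : ∀ t, s t ∈ Set.Icc (0:ℝ) 1) :
    ∃ C, 0 ≤ C ∧ ∀ t, |F (s t)| ≤ C := by
  obtain ⟨C, hC⟩ := isCompact_Icc.exists_bound_of_continuousOn hF
  refine ⟨C, le_trans (abs_nonneg _) (hC _ (hs 0)), fun t => hC _ (hs t)⟩

lemma summable_F (hδ0 : 0 ≤ δ) (hδ1 : δ < 1) {C : ℝ} (hb : ∀ t, |F (s t)| ≤ C) (t : ℕ) :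
    Summable fun k => δ ^ k * F (s (t + k)) :=
  summable_geom_of_bounded hδ0 hδ1 (fun k => hb (t + k))

lemma summable_p_shift (hδ0 : 0 < δ) (hp : Summable fun t => δ ^ t * p t) (t : ℕ) :
    Summable fun k => δ ^ k * p (t + k) := by
  have h1 : Summable fun k => δ ^ (k + t) * p (k + t) :=
    (summable_nat_add_iff (f := fun t => δ ^ t * p t) t).mpr hp
  have h2 : Summable fun k => (δ ^ t)⁻¹ * (δ ^ (k + t) * p (k + t)) := h1.mul_left _
  refine h2.congr fun k => ?_
  have hne : (δ : ℝ) ^ t ≠ 0 := pow_ne_zero _ (ne_of_gt hδ0)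
  rw [add_comm t k, pow_add]
  field_simp

lemma summable_pi_int (hδ0 : 0 < δ) (hδ1 : δ < 1) {C : ℝ} (hb : ∀ t, |π (s t)| ≤ C)
    (hp : Summable fun t => δ ^ t * p t) (t : ℕ) :
    Summable fun k => δ ^ k * (π (s (t + k)) - p (t + k)) := by
  refine ((summable_F hδ0.le hδ1 hb t).sub (summable_p_shift hδ0 hp t)).congr fun k => ?_
  ring

lemma summable_w_int (hδ0 : 0 < δ) (hδ1 : δ < 1) {C : ℝ} (hb : ∀ t, |w (s t)| ≤ C)
    (hp : Summable fun t => δ ^ t * p t) (t : ℕ) :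
    Summable fun k => δ ^ k * (w (s (t + k)) + p (t + k)) := by
  refine ((summable_F hδ0.le hδ1 hb t).add (summable_p_shift hδ0 hp t)).congr fun k => ?_
  ring

lemma geom_shift {b : ℕ → ℝ} (hb : Summable fun k => δ ^ k * b k) :
    ∑' k : ℕ, δ ^ k * b k = b 0 + δ * ∑' k : ℕ, δ ^ k * b (k + 1) := by
  rw [Summable.tsum_eq_zero_add hb]
  rw [← tsum_mul_left]
  congr 1
  · simp
  · congr 1; funext k; ring

lemma PiVal_rec (hδ0 : 0 < δ) (hδ1 : δ < 1) {C : ℝ} (hb : ∀ t, |π (s t)| ≤ C)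
    (hp : Summable fun t => δ ^ t * p t) (t : ℕ) :
    PiVal δ π s p t = (π (s t) - p t) + δ * PiVal δ π s p (t + 1) := by
  have h := geom_shift (b := fun k => π (s (t + k)) - p (t + k))
    (summable_pi_int hδ0 hδ1 hb hp t)
  simp only [add_zero] at h
  have e : (fun k : ℕ => δ ^ k * (π (s (t + (k + 1))) - p (t + (k + 1))))
      = fun k : ℕ => δ ^ k * (π (s (t + 1 + k)) - p (t + 1 + k)) := by
    funext k; rw [show t + (k + 1) = t + 1 + k by omega]
  rw [e] at h
  exact h

lemma WVal_rec (hδ0 : 0 < δ) (hδ1 : δ < 1) {C : ℝ} (hb : ∀ t, |w (s t)| ≤ C)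
    (hp : Summable fun t => δ ^ t * p t) (t : ℕ) :
    WVal δ w s p t = (w (s t) + p t) + δ * WVal δ w s p (t + 1) := by
  have h := geom_shift (b := fun k => w (s (t + k)) + p (t + k))
    (summable_w_int hδ0 hδ1 hb hp t)
  simp only [add_zero] at h
  have e : (fun k : ℕ => δ ^ k * (w (s (t + (k + 1))) + p (t + (k + 1))))
      = fun k : ℕ => δ ^ k * (w (s (t + 1 + k)) + p (t + 1 + k)) := by
    funext k; rw [show t + (k + 1) = t + 1 + k by omega]
  rw [e] at h
  exact h

lemma Gval_rec (hδ0 : 0 ≤ δ) (hδ1 : δ < 1) {C : ℝ} (hb : ∀ t, |F (s t)| ≤ C) (t : ℕ) :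
    Gval δ F s t = F (s t) + δ * Gval δ F s (t + 1) := by
  have h := geom_shift (b := fun k => F (s (t + k))) (summable_F hδ0 hδ1 hb t)
  simp only [add_zero] at h
  have e : (fun k : ℕ => δ ^ k * F (s (t + (k + 1))))
      = fun k : ℕ => δ ^ k * F (s (t + 1 + k)) := by
    funext k; rw [show t + (k + 1) = t + 1 + k by omega]
  rw [e] at h
  exact h

lemma PiVal_add_WVal (hδ0 : 0 < δ) (hδ1 : δ < 1) {C C' : ℝ} (hbπ : ∀ t, |π (s t)| ≤ C)
    (hbw : ∀ t, |w (s t)| ≤ C') (hp : Summable fun t => δ ^ t * p t) (t : ℕ) :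
    PiVal δ π s p t + WVal δ w s p t = Gval δ (fun y => π y + w y) s t := by
  rw [PiVal, WVal, Gval, ← Summable.tsum_add (summable_pi_int hδ0 hδ1 hbπ hp t)
    (summable_w_int hδ0 hδ1 hbw hp t)]
  congr 1
  funext k
  ring

lemma Gval_const_tail (hδ0 : 0 ≤ δ) (hδ1 : δ < 1) {c : ℝ} (t : ℕ)
    (h : ∀ k, s (t + k) = c) : Gval δ F s t = F c / (1 - δ) := by
  rw [Gval]
  simp only [h]
  rw [tsum_mul_right, tsum_geometric_of_lt_one hδ0 hδ1, div_eq_mul_inv, mul_comm]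

lemma Gval_ge_const (hδ0 : 0 ≤ δ) (hδ1 : δ < 1) {C : ℝ} (hb : ∀ t, |F (s t)| ≤ C)
    {c : ℝ} (t : ℕ) (h : ∀ k, F c ≤ F (s (t + k))) : F c / (1 - δ) ≤ Gval δ F s t := by
  have hgeo : ∑' k : ℕ, δ ^ k * F c = F c / (1 - δ) := by
    rw [tsum_mul_right, tsum_geometric_of_lt_one hδ0 hδ1, div_eq_mul_inv, mul_comm]
  rw [← hgeo, Gval]
  refine Summable.tsum_le_tsum (fun k => ?_) ?_ (summable_F hδ0 hδ1 hb t)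
  · exact mul_le_mul_of_nonneg_left (h k) (pow_nonneg hδ0 k)
  · exact summable_geom_of_bounded hδ0 hδ1 (a := fun _ => F c) (C := |F c|) (fun _ => le_refl _)

lemma Gval_mono (hδ0 : 0 ≤ δ) (hδ1 : δ < 1) {C C' : ℝ} (hb : ∀ t, |F (s t)| ≤ C)
    {s' : ℕ → ℝ} (hb' : ∀ t, |F (s' t)| ≤ C') (t : ℕ)
    (h : ∀ k, F (s (t + k)) ≤ F (s' (t + k))) : Gval δ F s t ≤ Gval δ F s' t :=
  Summable.tsum_le_tsum (fun k => mul_le_mul_of_nonneg_left (h k) (pow_nonneg hδ0 k))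
    (summable_F hδ0 hδ1 hb t) (summable_F hδ0 hδ1 hb' t)

lemma tsum_telescope {f : ℕ → ℝ} (h0 : Tendsto f atTop (nhds 0))
    (hs : Summable fun k => f k - f (k + 1)) : ∑' k : ℕ, (f k - f (k + 1)) = f 0 := by
  have h1 := hs.hasSum.tendsto_sum_nat
  have h2 : Tendsto (fun n => ∑ i ∈ Finset.range n, (f i - f (i + 1))) atTop (nhds (f 0)) := by
    simp only [Finset.sum_range_sub']
    simpa using (tendsto_const_nhds (x := f 0)).sub h0
  exact tendsto_nhds_unique h1 h2

noncomputable def pstar (δ : ℝ) (w : ℝ → ℝ) (x : ℕ → ℝ) : ℕ → ℝ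
  | 0 => 0
  | t + 1 => (w (x t) - w (x (t + 1))) / (1 - δ)

lemma pstar_bound (hδ1 : δ < 1) {C : ℝ} (hC : 0 ≤ C) (hb : ∀ t, |w (x t)| ≤ C) (t : ℕ) :
    |pstar δ w x t| ≤ 2 * C / (1 - δ) := by
  have h1δ : (0:ℝ) < 1 - δ := by linarith
  cases t with
  | zero => simp only [pstar, abs_zero]; positivity
  | succ u =>
    rw [pstar, abs_div, abs_of_pos h1δ]
    have h1 : |w (x u) - w (x (u + 1))| ≤ 2 * C := by
      have := abs_add_le (w (x u)) (-(w (x (u + 1))))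
      rw [abs_neg, ← sub_eq_add_neg] at this
      have hu := hb u; have hu1 := hb (u + 1)
      linarith
    gcongr

lemma pstar_nonneg (hδ1 : δ < 1) (hxm : Monotone x) (hxI : ∀ t, x t ∈ Set.Icc (0:ℝ) 1)
    (hwa : AntitoneOn w (Set.Icc 0 1)) (t : ℕ) : 0 ≤ pstar δ w x t := by
  cases t with
  | zero => exact le_refl 0
  | succ u =>
    exact div_nonneg (sub_nonneg.2 (hwa (hxI u) (hxI (u + 1)) (hxm (by omega))))
      (by linarith)

lemma WVal_pstar (hδ0 : 0 < δ) (hδ1 : δ < 1) {C : ℝ} (hb : ∀ t, |w (x t)| ≤ C) (t : ℕ) :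
    WVal δ w x (pstar δ w x) (t + 1) = w (x t) / (1 - δ) := by
  have h1δ : (0:ℝ) < 1 - δ := by linarith
  set f : ℕ → ℝ := fun k => δ ^ k * w (x (t + k)) / (1 - δ) with hf
  have hsummand : ∀ k : ℕ, δ ^ k * (w (x (t + 1 + k)) + pstar δ w x (t + 1 + k))
      = f k - f (k + 1) := by
    intro k
    have e1 : t + 1 + k = (t + k) + 1 := by omega
    rw [e1, pstar]
    simp only [hf]
    have e2 : t + (k + 1) = t + k + 1 := by omega
    rw [e2]
    field_simp
    ring
  have hsf : Summable f := by
    have := (summable_F (F := w) hδ0.le hδ1 hb t)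
    exact this.div_const (1 - δ)
  have hsum : Summable fun k => f k - f (k + 1) :=
    hsf.sub ((summable_nat_add_iff (f := f) 1).mpr hsf)
  have h0 : Tendsto f atTop (nhds 0) := by
    apply squeeze_zero_norm (a := fun k => (C / (1 - δ)) * δ ^ k)
    · intro k
      rw [hf]
      simp only [Real.norm_eq_abs, abs_div, abs_mul, abs_pow, abs_of_nonneg hδ0.le,
        abs_of_pos h1δ]
      rw [div_le_iff₀ h1δ]
      have := hb (t + k)
      have hp : (0:ℝ) ≤ δ ^ k := pow_nonneg hδ0.le k
      calc δ ^ k * |w (x (t + k))| ≤ δ ^ k * C := by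
            exact mul_le_mul_of_nonneg_left this hp
        _ = C / (1 - δ) * δ ^ k * (1 - δ) := by field_simp
    · simpa using (tendsto_pow_atTop_nhds_zero_of_lt_one hδ0.le hδ1).const_mul (C / (1 - δ))
  calc WVal δ w x (pstar δ w x) (t + 1) = ∑' k : ℕ, (f k - f (k + 1)) :=
        tsum_congr hsummand
    _ = f 0 := tsum_telescope h0 hsum
    _ = w (x t) / (1 - δ) := by simp [hf]

lemma star_of_impl (hδ0 : 0 < δ) (hδ1 : δ < 1) {Cπ Cw : ℝ} (hbπ : ∀ t, |π (s t)| ≤ Cπ)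
    (hbw : ∀ t, |w (s t)| ≤ Cw) (himp : Implementable δ π w s p) (t : ℕ) :
    (π (s (t + 1)) + w (s t)) / (1 - δ) ≤ Gval δ (fun y => π y + w y) s (t + 1) := by
  obtain ⟨⟨hsI, hs0, hps⟩, hsm, hpn, hPIC, hEIC⟩ := himp
  have h1 := hPIC (t + 1)
  have h2 := hEIC t
  have h3 := PiVal_add_WVal hδ0 hδ1 hbπ hbw hps (t + 1)
  rw [add_div]
  linarith

lemma W0_ge (hδ0 : 0 < δ) (hδ1 : δ < 1) {Cw : ℝ} (hbw : ∀ t, |w (s t)| ≤ Cw)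
    (himp : Implementable δ π w s p) : w 0 / (1 - δ) ≤ WVal δ w s p 0 := by
  obtain ⟨⟨hsI, hs0, hps⟩, hsm, hpn, hPIC, hEIC⟩ := himp
  have h1δ : (0:ℝ) < 1 - δ := by linarith
  have hrec := WVal_rec hδ0 hδ1 hbw hps 0
  have hE := hEIC 0
  rw [hs0] at hrec hE
  have hmul := mul_le_mul_of_nonneg_left hE hδ0.le
  have hid : w 0 + δ * (w 0 / (1 - δ)) = w 0 / (1 - δ) := by field_simp; ring
  have hp0 := hpn 0
  linarith

lemma implementable_pstar (hδ0 : 0 < δ) (hδ1 : δ < 1) {Cπ Cw : ℝ} (hCw : 0 ≤ Cw)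
    (hbπ : ∀ t, |π (x t)| ≤ Cπ) (hbw : ∀ t, |w (x t)| ≤ Cw)
    (hxI : ∀ t, x t ∈ Set.Icc (0:ℝ) 1) (hx0 : x 0 = 0) (hxm : Monotone x)
    (hwa : AntitoneOn w (Set.Icc 0 1)) (hGm : MonotoneOn (fun y => π y + w y) (Set.Icc 0 1))
    (hstar : ∀ t, (π (x (t + 1)) + w (x t)) / (1 - δ) ≤ Gval δ (fun y => π y + w y) x (t + 1)) :
    Implementable δ π w x (pstar δ w x) ∧
    PiVal δ π x (pstar δ w x) 0 = Gval δ (fun y => π y + w y) x 0 - w 0 / (1 - δ) := by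
  have h1δ : (0:ℝ) < 1 - δ := by linarith
  have hps : Summable fun t => δ ^ t * pstar δ w x t :=
    summable_geom_of_bounded hδ0.le hδ1 (pstar_bound hδ1 hCw hbw)
  have hWp : ∀ t, WVal δ w x (pstar δ w x) (t + 1) = w (x t) / (1 - δ) :=
    WVal_pstar hδ0 hδ1 hbw
  have hPW : ∀ t, PiVal δ π x (pstar δ w x) t + WVal δ w x (pstar δ w x) t
      = Gval δ (fun y => π y + w y) x t := PiVal_add_WVal hδ0 hδ1 hbπ hbw hps
  have hW0 : WVal δ w x (pstar δ w x) 0 = w 0 / (1 - δ) := by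
    have hrec := WVal_rec hδ0 hδ1 hbw hps 0
    rw [show (0:ℕ) + 1 = 1 from rfl] at hrec
    rw [show (1:ℕ) = 0 + 1 from rfl, hWp 0, hx0] at hrec
    simp only [pstar] at hrec
    rw [hrec]
    field_simp
    ring
  have hGb : ∀ t, |π (x t) + w (x t)| ≤ Cπ + Cw := by
    intro t
    calc |π (x t) + w (x t)| ≤ |π (x t)| + |w (x t)| := abs_add_le _ _
      _ ≤ Cπ + Cw := add_le_add (hbπ t) (hbw t)
  have hPIC : ∀ t, π (x t) / (1 - δ) ≤ PiVal δ π x (pstar δ w x) t := by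
    intro t
    cases t with
    | zero =>
      have hG0 : (π (x 0) + w (x 0)) / (1 - δ) ≤ Gval δ (fun y => π y + w y) x 0 := by
        refine Gval_ge_const (F := fun y => π y + w y) hδ0.le hδ1 hGb 0 (fun k => ?_)
        exact hGm (hxI 0) (hxI (0 + k)) (hxm (Nat.zero_le _))
      have := hPW 0
      rw [hW0] at this
      rw [add_div] at hG0
      rw [hx0] at *
      linarith
    | succ u =>
      have hs := hstar u
      have h1 := hPW (u + 1)
      rw [hWp u] at h1
      rw [add_div] at hs
      linarith
  refine ⟨⟨⟨hxI, hx0, hps⟩, hxm, pstar_nonneg hδ1 hxm hxI hwa, hPIC, fun t => ?_⟩, ?_⟩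
  · rw [hWp t]
  · have := hPW 0
    rw [hW0] at this
    linarith
lemma Gval_lb_term (hδ0 : 0 ≤ δ) (hδ1 : δ < 1) {C : ℝ} (hb : ∀ t, |F (s t)| ≤ C)
    {c : ℝ} (t i : ℕ) (hge : ∀ k, F c ≤ F (s (t + k))) :
    F c / (1 - δ) + δ ^ i * (F (s (t + i)) - F c) ≤ Gval δ F s t := by
  have hgeo : Summable fun k : ℕ => δ ^ k * F c :=
    summable_geom_of_bounded hδ0 hδ1 (a := fun _ => F c) (C := |F c|) fun _ => le_refl _
  have h2 : ∑' k : ℕ, δ ^ k * F c = F c / (1 - δ) := by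
    rw [tsum_mul_right, tsum_geometric_of_lt_one hδ0 hδ1, div_eq_mul_inv, mul_comm]
  have hsum1 : Summable fun k => δ ^ k * (F (s (t + k)) - F c) := by
    refine summable_geom_of_bounded hδ0 hδ1 (C := C + |F c|) fun k => ?_
    calc |F (s (t + k)) - F c| ≤ |F (s (t + k))| + |F c| := abs_sub _ _
      _ ≤ C + |F c| := by have := hb (t + k); linarith
  have key : ∑' k : ℕ, δ ^ k * (F (s (t + k)) - F c) = Gval δ F s t - F c / (1 - δ) := by
    rw [eq_sub_iff_add_eq, ← h2, ← Summable.tsum_add hsum1 hgeo]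
    exact tsum_congr fun k => by ring
  have h3 : δ ^ i * (F (s (t + i)) - F c) ≤ ∑' k : ℕ, δ ^ k * (F (s (t + k)) - F c) :=
    Summable.le_tsum hsum1 i fun j _ => mul_nonneg (pow_nonneg hδ0 j) (sub_nonneg.2 (hge j))
  linarith

lemma Gval_congr {s' : ℕ → ℝ} (t : ℕ) (h : ∀ k, s (t + k) = s' (t + k)) :
    Gval δ F s t = Gval δ F s' t := tsum_congr fun k => by rw [h k]

lemma Gval_strict (hδ0 : 0 < δ) (hδ1 : δ < 1) {C C' : ℝ} (hb : ∀ t, |F (s t)| ≤ C)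
    {s' : ℕ → ℝ} (hb' : ∀ t, |F (s' t)| ≤ C') (h : ∀ k, F (s k) ≤ F (s' k)) (i : ℕ)
    (hi : F (s i) < F (s' i)) : Gval δ F s 0 < Gval δ F s' 0 := by
  rw [Gval, Gval]
  exact Summable.tsum_lt_tsum (i := i)
    (fun k => mul_le_mul_of_nonneg_left (h (0 + k)) (pow_nonneg hδ0.le _))
    (mul_lt_mul_of_pos_left (by simpa using hi) (pow_pos hδ0 i))
    (summable_F hδ0.le hδ1 hb 0) (summable_F hδ0.le hδ1 hb' 0)

set_option maxHeartbeats 1000000 in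
lemma binding_of_optimal (hδ0 : 0 < δ) (hδ1 : δ < 1)
    (hπc : ContinuousOn π (Set.Icc 0 1)) (hwc : ContinuousOn w (Set.Icc 0 1))
    (hπm : StrictMonoOn π (Set.Icc 0 1)) (hwa : StrictAntiOn w (Set.Icc 0 1))
    (hGm : StrictMonoOn (fun y => π y + w y) (Set.Icc 0 1))
    (hopt : Optimal δ π w s p) (u : ℕ) :
    (1 - δ) * Gval δ (fun y => π y + w y) s (u + 1) = π (s (u + 1)) + w (s u) := by
  have h1δ : (0:ℝ) < 1 - δ := by linarith
  obtain ⟨hsI, hs0, hpsum⟩ := hopt.1.1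
  have hsm := hopt.1.2.1
  obtain ⟨Cπ, hCπ⟩ := isCompact_Icc.exists_bound_of_continuousOn hπc
  obtain ⟨Cw, hCw⟩ := isCompact_Icc.exists_bound_of_continuousOn hwc
  have hbπ : ∀ t, |π (s t)| ≤ Cπ := fun t => by
    have := hCπ _ (hsI t); rwa [Real.norm_eq_abs] at this
  have hbw : ∀ t, |w (s t)| ≤ Cw := fun t => by
    have := hCw _ (hsI t); rwa [Real.norm_eq_abs] at this
  have hCw0 : 0 ≤ Cw := le_trans (abs_nonneg _) (hbw 0)
  have hbG : ∀ t, |(fun y => π y + w y) (s t)| ≤ Cπ + Cw := fun t => by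
    simp only
    calc |π (s t) + w (s t)| ≤ |π (s t)| + |w (s t)| := abs_add_le _ _
      _ ≤ Cπ + Cw := add_le_add (hbπ t) (hbw t)
  have hstar := star_of_impl hδ0 hδ1 hbπ hbw hopt.1
  have hstarm : ∀ t, π (s (t + 1)) + w (s t) ≤ Gval δ (fun y => π y + w y) s (t + 1) * (1 - δ) := by
    intro t; have := hstar t; rwa [div_le_iff₀ h1δ] at this
  by_contra hne
  have hlt : π (s (u + 1)) + w (s u) < (1 - δ) * Gval δ (fun y => π y + w y) s (u + 1) := by
    rcases lt_or_eq_of_le (hstarm u) with h | h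
    · linarith
    · exact absurd (by linarith : (1 - δ) * Gval δ (fun y => π y + w y) s (u + 1)
        = π (s (u + 1)) + w (s u)) hne
  by_cases hconst : ∀ k, s (u + 1 + k) = s (u + 1)
  · -- eventually constant: binding is automatic, contradiction with slack
    have hG := Gval_const_tail (F := fun y => π y + w y) hδ0.le hδ1 (u + 1) hconst
    rw [hG] at hlt
    have he : (1 - δ) * ((fun y => π y + w y) (s (u + 1)) / (1 - δ))
        = π (s (u + 1)) + w (s (u + 1)) := by field_simp
    rw [he] at hlt
    have hmono := hwa.antitoneOn (hsI u) (hsI (u + 1)) (hsm (Nat.le_succ u))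
    linarith
  · push_neg at hconst
    have hex : ∃ k, s (u + 1) < s (u + 1 + k) := by
      obtain ⟨k, hk⟩ := hconst
      exact ⟨k, lt_of_le_of_ne (hsm (by omega)) (Ne.symm hk)⟩
    obtain ⟨K, hKspec, hKmin⟩ : ∃ K, s (u + 1) < s (u + 1 + K) ∧
        ∀ j, j < K → ¬ s (u + 1) < s (u + 1 + j) :=
      ⟨Nat.find hex, Nat.find_spec hex, fun j hj => Nat.find_min hex hj⟩
    have hK1 : 1 ≤ K := by
      rcases Nat.eq_zero_or_pos K with h0 | h; · rw [h0] at hKspec; simp at hKspec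
      · exact h
    have hflat : ∀ j, j < K → s (u + 1 + j) = s (u + 1) := fun j hj =>
      le_antisymm (not_lt.mp (hKmin j hj)) (hsm (by omega))
    set slack : ℕ → ℝ := fun j => (1 - δ) * Gval δ (fun y => π y + w y) s (u + 1 + j)
      - (π (s (u + 1 + j)) + w (s (u + j))) with hslackdef
    have hslackpos : ∀ j, j < K → 0 < slack j := by
      intro j hj
      rcases Nat.eq_zero_or_pos j with h0 | hjpos
      · subst h0; simp only [hslackdef, Nat.add_zero]; linarith
      · have hsj : s (u + 1 + j) = s (u + 1) := hflat j hj
        have hsj' : s (u + j) = s (u + 1) := by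
          have := hflat (j - 1) (by omega)
          rwa [show u + 1 + (j - 1) = u + j by omega] at this
        have hgeK : ∀ k, (fun y => π y + w y) (s (u + 1)) ≤ (fun y => π y + w y) (s (u + 1 + j + k)) :=
          fun k => hGm.monotoneOn (hsI _) (hsI _) (hsm (by omega))
        have hlb := Gval_lb_term (F := fun y => π y + w y) hδ0.le hδ1 hbG (u + 1 + j) (K - j) hgeK
        rw [show u + 1 + j + (K - j) = u + 1 + K by omega] at hlb
        have hGlt : (fun y => π y + w y) (s (u + 1)) < (fun y => π y + w y) (s (u + 1 + K)) :=
          hGm (hsI _) (hsI _) hKspec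
        have hpow : (0:ℝ) < δ ^ (K - j) := pow_pos hδ0 _
        simp only [hslackdef, hsj, hsj']
        have h2 := mul_le_mul_of_nonneg_left hlb h1δ.le
        have h3 : (1 - δ) * ((fun y => π y + w y) (s (u + 1)) / (1 - δ))
            = π (s (u + 1)) + w (s (u + 1)) := by field_simp
        have h4 : 0 < (1 - δ) * (δ ^ (K - j) * ((fun y => π y + w y) (s (u + 1 + K))
            - (fun y => π y + w y) (s (u + 1)))) :=
          mul_pos h1δ (mul_pos hpow (sub_pos.2 hGlt))
        simp only at h2 h3 h4 ⊢
        nlinarith [h2, h3, h4]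
    have hnonempty : (Finset.range K).Nonempty := ⟨0, Finset.mem_range.mpr hK1⟩
    set m := (Finset.range K).inf' hnonempty slack with hm
    have hmpos : 0 < m :=
      (Finset.lt_inf'_iff hnonempty).mpr fun j hj => hslackpos j (Finset.mem_range.mp hj)
    have hmle : ∀ j, j < K → m ≤ slack j := fun j hj =>
      Finset.inf'_le slack (Finset.mem_range.mpr hj)
    -- choose the perturbed value y
    have hcont := hπc (s (u + 1)) (hsI (u + 1))
    rw [Metric.continuousWithinAt_iff] at hcont
    obtain ⟨η, hη0, hη⟩ := hcont m hmpos
    set y : ℝ := min (s (u + 1) + η / 2) (s (u + 1 + K)) with hy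
    have hylt : s (u + 1) < y := lt_min (by linarith) hKspec
    have hyle : y ≤ s (u + 1 + K) := min_le_right _ _
    have hyI : y ∈ Set.Icc (0:ℝ) 1 := ⟨le_trans (hsI (u + 1)).1 hylt.le, le_trans hyle (hsI _).2⟩
    have hydist : dist y (s (u + 1)) < η := by
      rw [Real.dist_eq, abs_of_pos (sub_pos.2 hylt)]
      have := min_le_left (s (u + 1) + η / 2) (s (u + 1 + K))
      have : y ≤ s (u + 1) + η / 2 := this
      linarith
    have hπy : π y - π (s (u + 1)) < m := by
      have h5 := hη hyI hydist
      rw [Real.dist_eq] at h5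
      exact (abs_lt.mp h5).2
    have hπylt : π (s (u + 1)) < π y := hπm (hsI _) hyI hylt
    have hwyle : w y ≤ w (s (u + 1)) := hwa.antitoneOn (hsI _) hyI hylt.le
    -- the perturbed path
    set x' : ℕ → ℝ := fun τ => if u + 1 ≤ τ ∧ τ < u + 1 + K then y else s τ with hx'
    have hx'block : ∀ τ, u + 1 ≤ τ → τ < u + 1 + K → x' τ = y := fun τ h1 h2 => by
      simp only [hx']; rw [if_pos ⟨h1, h2⟩]
    have hx'out : ∀ τ, (τ < u + 1 ∨ u + 1 + K ≤ τ) → x' τ = s τ := fun τ h => by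
      simp only [hx']; rw [if_neg (by omega)]
    have hsblock : ∀ τ, u + 1 ≤ τ → τ < u + 1 + K → s τ = s (u + 1) := fun τ h1 h2 => by
      have := hflat (τ - (u + 1)) (by omega)
      rwa [show u + 1 + (τ - (u + 1)) = τ by omega] at this
    have hx'I : ∀ τ, x' τ ∈ Set.Icc (0:ℝ) 1 := by
      intro τ
      by_cases h : u + 1 ≤ τ ∧ τ < u + 1 + K
      · rw [hx'block τ h.1 h.2]; exact hyI
      · rw [hx'out τ (by omega)]; exact hsI τ
    have hx'0 : x' 0 = 0 := by rw [hx'out 0 (Or.inl (by omega)), hs0]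
    have hsx' : ∀ τ, s τ ≤ x' τ := by
      intro τ
      by_cases h : u + 1 ≤ τ ∧ τ < u + 1 + K
      · rw [hx'block τ h.1 h.2, hsblock τ h.1 h.2]; exact hylt.le
      · rw [hx'out τ (by omega)]
    have hx'm : Monotone x' := by
      intro a b hab
      by_cases ha : u + 1 ≤ a ∧ a < u + 1 + K <;> by_cases hb2 : u + 1 ≤ b ∧ b < u + 1 + K
      · rw [hx'block a ha.1 ha.2, hx'block b hb2.1 hb2.2]
      · have hbge : u + 1 + K ≤ b := by omega
        rw [hx'block a ha.1 ha.2, hx'out b (Or.inr hbge)]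
        exact le_trans hyle (hsm (by omega))
      · have halt : a < u + 1 := by omega
        rw [hx'out a (Or.inl halt), hx'block b hb2.1 hb2.2]
        exact le_trans (hsm (by omega : a ≤ u + 1)) hylt.le
      · rw [hx'out a (by omega), hx'out b (by omega)]
        exact hsm hab
    have hbπ' : ∀ τ, |π (x' τ)| ≤ Cπ := fun τ => by
      have := hCπ _ (hx'I τ); rwa [Real.norm_eq_abs] at this
    have hbw' : ∀ τ, |w (x' τ)| ≤ Cw := fun τ => by
      have := hCw _ (hx'I τ); rwa [Real.norm_eq_abs] at this
    have hbG' : ∀ τ, |(fun y => π y + w y) (x' τ)| ≤ Cπ + Cw := fun τ => by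
      simp only
      calc |π (x' τ) + w (x' τ)| ≤ |π (x' τ)| + |w (x' τ)| := abs_add_le _ _
        _ ≤ Cπ + Cw := add_le_add (hbπ' τ) (hbw' τ)
    have hGptw : ∀ τ, (fun y => π y + w y) (s τ) ≤ (fun y => π y + w y) (x' τ) :=
      fun τ => hGm.monotoneOn (hsI τ) (hx'I τ) (hsx' τ)
    -- star condition for the perturbed path
    have hstar' : ∀ t, (π (x' (t + 1)) + w (x' t)) / (1 - δ)
        ≤ Gval δ (fun y => π y + w y) x' (t + 1) := by
      intro t
      rw [div_le_iff₀ h1δ]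
      rcases lt_or_ge (t + 1) (u + 1) with hpos | hpos
      · have e1 : x' (t + 1) = s (t + 1) := hx'out _ (Or.inl hpos)
        have e0 : x' t = s t := hx'out _ (Or.inl (by omega))
        have hmonoG : Gval δ (fun y => π y + w y) s (t + 1)
            ≤ Gval δ (fun y => π y + w y) x' (t + 1) :=
          Gval_mono hδ0.le hδ1 hbG hbG' (t + 1) fun k => hGptw _
        have h6 := hstarm t
        have h7 := mul_le_mul_of_nonneg_right hmonoG h1δ.le
        rw [e1, e0]; linarith
      · rcases lt_or_ge (t + 1) (u + 1 + K) with hin | hout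
        · -- inside the block
          have e1 : x' (t + 1) = y := hx'block _ hpos hin
          have hjK : t - u < K := by omega
          have hwb2 : w (x' t) ≤ w (s (u + (t - u))) := by
            by_cases ht : t + 1 = u + 1
            · have e0 : x' t = s t := hx'out _ (Or.inl (by omega))
              rw [e0, show u + (t - u) = t by omega]
            · have hx't : x' t = y := hx'block _ (by omega) (by omega)
              have hst : s (u + (t - u)) = s (u + 1) := hsblock _ (by omega) (by omega)
              rw [hx't, hst]; exact hwyle
          have hmonoG : Gval δ (fun y => π y + w y) s (t + 1)
              ≤ Gval δ (fun y => π y + w y) x' (t + 1) :=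
            Gval_mono hδ0.le hδ1 hbG hbG' (t + 1) fun k => hGptw _
          have hsl := hmle (t - u) hjK
          simp only [hslackdef] at hsl
          have hidx : u + 1 + (t - u) = t + 1 := by omega
          rw [hidx] at hsl
          have hseq1 : s (t + 1) = s (u + 1) := hsblock (t + 1) hpos hin
          rw [hseq1] at hsl
          have h7 := mul_le_mul_of_nonneg_left hmonoG h1δ.le
          rw [e1]
          linarith [hπy, hwb2, hsl]
        · -- past the block
          have e1 : x' (t + 1) = s (t + 1) := hx'out _ (Or.inr hout)
          have hGeq2 : Gval δ (fun y => π y + w y) x' (t + 1)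
              = Gval δ (fun y => π y + w y) s (t + 1) :=
            Gval_congr (t + 1) fun k => by rw [hx'out (t + 1 + k) (Or.inr (by omega))]
          by_cases ht : t + 1 = u + 1 + K
          · have hx't : x' t = y := hx'block _ (by omega) (by omega)
            have hst : s t = s (u + 1) := hsblock _ (by omega) (by omega)
            have h6 := hstarm t
            rw [hst] at h6
            rw [e1, hx't, hGeq2]
            linarith
          · have hx't : x' t = s t := hx'out _ (Or.inr (by omega))
            have h6 := hstarm t
            rw [e1, hx't, hGeq2]
            linarith
    -- strict improvement of total surplus at time 0
    have hstrict : Gval δ (fun y => π y + w y) s 0 < Gval δ (fun y => π y + w y) x' 0 := by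
      refine Gval_strict hδ0 hδ1 hbG hbG' (fun k => hGptw k) (u + 1) ?_
      rw [hx'block (u + 1) le_rfl (by omega)]
      exact hGm (hsI _) hyI hylt
    obtain ⟨himps, hPis⟩ := implementable_pstar hδ0 hδ1 hCw0 hbπ' hbw' hx'I hx'0 hx'm
      hwa.antitoneOn hGm.monotoneOn hstar'
    have hub := hopt.2 x' (pstar δ w x') himps
    have hPW0 := PiVal_add_WVal hδ0 hδ1 hbπ hbw hpsum 0
    have hW0ge := W0_ge hδ0 hδ1 hbw hopt.1
    linarith
end OCU

/-- Uniqueness of the optimal contract. -/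
theorem optimal_contract_unique
    (δ : ℝ) (hδ : δ ∈ Set.Ioo (0 : ℝ) 1) (π w : ℝ → ℝ)
    (hπc : ContinuousOn π (Set.Icc 0 1)) (hwc : ContinuousOn w (Set.Icc 0 1))
    (hπm : StrictMonoOn π (Set.Icc 0 1)) (hwa : StrictAntiOn w (Set.Icc 0 1))
    (hGm : StrictMonoOn (fun x => π x + w x) (Set.Icc 0 1))
    (s p s' p' : ℕ → ℝ) (hopt : Optimal δ π w s p) (hopt' : Optimal δ π w s' p') :
    (∀ t, s t = s' t) ∧ (∀ t, p t = p' t) := by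
  obtain ⟨hδ0, hδ1⟩ := hδ
  have h1δ : (0:ℝ) < 1 - δ := by linarith
  obtain ⟨Cπ, hCπ⟩ := isCompact_Icc.exists_bound_of_continuousOn hπc
  obtain ⟨Cw, hCw⟩ := isCompact_Icc.exists_bound_of_continuousOn hwc
  obtain ⟨hsI, hs0, hpsum⟩ := hopt.1.1
  have hsm := hopt.1.2.1
  have hPIC := hopt.1.2.2.2.1
  have hEIC := hopt.1.2.2.2.2
  obtain ⟨hsI', hs0', hpsum'⟩ := hopt'.1.1
  have hsm' := hopt'.1.2.1
  have hPIC' := hopt'.1.2.2.2.1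
  have hEIC' := hopt'.1.2.2.2.2
  have hbπ : ∀ t, |π (s t)| ≤ Cπ := fun t => by
    have := hCπ _ (hsI t); rwa [Real.norm_eq_abs] at this
  have hbw : ∀ t, |w (s t)| ≤ Cw := fun t => by
    have := hCw _ (hsI t); rwa [Real.norm_eq_abs] at this
  have hbπ2 : ∀ t, |π (s' t)| ≤ Cπ := fun t => by
    have := hCπ _ (hsI' t); rwa [Real.norm_eq_abs] at this
  have hbw2 : ∀ t, |w (s' t)| ≤ Cw := fun t => by
    have := hCw _ (hsI' t); rwa [Real.norm_eq_abs] at this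
  have hCw0 : 0 ≤ Cw := le_trans (abs_nonneg _) (hbw 0)
  have hbG : ∀ t, |(fun y => π y + w y) (s t)| ≤ Cπ + Cw := fun t => by
    simp only
    calc |π (s t) + w (s t)| ≤ |π (s t)| + |w (s t)| := abs_add_le _ _
      _ ≤ Cπ + Cw := add_le_add (hbπ t) (hbw t)
  have hbG2 : ∀ t, |(fun y => π y + w y) (s' t)| ≤ Cπ + Cw := fun t => by
    simp only
    calc |π (s' t) + w (s' t)| ≤ |π (s' t)| + |w (s' t)| := abs_add_le _ _
      _ ≤ Cπ + Cw := add_le_add (hbπ2 t) (hbw2 t)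
  have hbind := OCU.binding_of_optimal hδ0 hδ1 hπc hwc hπm hwa hGm hopt
  have hbind' := OCU.binding_of_optimal hδ0 hδ1 hπc hwc hπm hwa hGm hopt'
  have hPieq : PiVal δ π s p 0 = PiVal δ π s' p' 0 :=
    le_antisymm (hopt'.2 s p hopt.1) (hopt.2 s' p' hopt'.1)
  have hstar := OCU.star_of_impl hδ0 hδ1 hbπ hbw hopt.1
  have hstar' := OCU.star_of_impl hδ0 hδ1 hbπ2 hbw2 hopt'.1
  obtain ⟨himps, hPis⟩ := OCU.implementable_pstar hδ0 hδ1 hCw0 hbπ hbw hsI hs0 hsm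
    hwa.antitoneOn hGm.monotoneOn hstar
  obtain ⟨himps', hPis'⟩ := OCU.implementable_pstar hδ0 hδ1 hCw0 hbπ2 hbw2 hsI' hs0' hsm'
    hwa.antitoneOn hGm.monotoneOn hstar'
  have hPW := OCU.PiVal_add_WVal hδ0 hδ1 hbπ hbw hpsum 0
  have hPW' := OCU.PiVal_add_WVal hδ0 hδ1 hbπ2 hbw2 hpsum' 0
  have hW0ge := OCU.W0_ge hδ0 hδ1 hbw hopt.1
  have hW0ge' := OCU.W0_ge hδ0 hδ1 hbw2 hopt'.1
  have hub := hopt.2 _ _ himps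
  have hub' := hopt'.2 _ _ himps'
  have hW0 : WVal δ w s p 0 = w 0 / (1 - δ) := by linarith
  have hW0' : WVal δ w s' p' 0 = w 0 / (1 - δ) := by linarith
  have hGeq0 : OCU.Gval δ (fun y => π y + w y) s 0
      = OCU.Gval δ (fun y => π y + w y) s' 0 := by linarith
  have key : ∀ t, s t = s' t ∧ OCU.Gval δ (fun y => π y + w y) s t
      = OCU.Gval δ (fun y => π y + w y) s' t := by
    intro t
    induction t with
    | zero => exact ⟨by rw [hs0, hs0'], hGeq0⟩
    | succ n ih =>
      obtain ⟨hse, hGe⟩ := ih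
      have hrec := OCU.Gval_rec (F := fun y => π y + w y) hδ0.le hδ1 hbG n
      have hrec' := OCU.Gval_rec (F := fun y => π y + w y) hδ0.le hδ1 hbG2 n
      have hGe1 : OCU.Gval δ (fun y => π y + w y) s (n + 1)
          = OCU.Gval δ (fun y => π y + w y) s' (n + 1) := by
        rw [hrec, hrec', hse] at hGe
        have h9 : δ * OCU.Gval δ (fun y => π y + w y) s (n + 1)
            = δ * OCU.Gval δ (fun y => π y + w y) s' (n + 1) := by linarith
        exact mul_left_cancel₀ (ne_of_gt hδ0) h9
      have hb1 := hbind n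
      have hb2 := hbind' n
      rw [hGe1, hse] at hb1
      have hπeq : π (s (n + 1)) = π (s' (n + 1)) := by linarith
      exact ⟨hπm.injOn (hsI _) (hsI' _) hπeq, hGe1⟩
  have hseq : ∀ t, s t = s' t := fun t => (key t).1
  have hWpin : ∀ t, WVal δ w s p (t + 1) = w (s t) / (1 - δ) := by
    intro t
    have hb1 := hbind t
    have hPW1 := OCU.PiVal_add_WVal hδ0 hδ1 hbπ hbw hpsum (t + 1)
    have hpi := hPIC (t + 1)
    have hGv : OCU.Gval δ (fun y => π y + w y) s (t + 1)
        = (π (s (t + 1)) + w (s t)) / (1 - δ) := by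
      rw [eq_div_iff (ne_of_gt h1δ)]
      linarith
    rw [hGv, add_div] at hPW1
    exact le_antisymm (by linarith) (hEIC t)
  have hWpin' : ∀ t, WVal δ w s' p' (t + 1) = w (s' t) / (1 - δ) := by
    intro t
    have hb1 := hbind' t
    have hPW1 := OCU.PiVal_add_WVal hδ0 hδ1 hbπ2 hbw2 hpsum' (t + 1)
    have hpi := hPIC' (t + 1)
    have hGv : OCU.Gval δ (fun y => π y + w y) s' (t + 1)
        = (π (s' (t + 1)) + w (s' t)) / (1 - δ) := by
      rw [eq_div_iff (ne_of_gt h1δ)]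
      linarith
    rw [hGv, add_div] at hPW1
    exact le_antisymm (by linarith) (hEIC' t)
  refine ⟨hseq, fun t => ?_⟩
  have hrecW := OCU.WVal_rec hδ0 hδ1 hbw hpsum t
  have hrecW' := OCU.WVal_rec hδ0 hδ1 hbw2 hpsum' t
  cases t with
  | zero =>
    rw [hW0, hWpin 0, hs0] at hrecW
    rw [hW0', hWpin' 0, hs0'] at hrecW'
    linarith
  | succ n =>
    rw [hWpin n, hWpin (n + 1)] at hrecW
    rw [hWpin' n, hWpin' (n + 1)] at hrecW'
    rw [hseq n, hseq (n + 1)] at hrecW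
    linarith
end

section
/- Trivial case of the optimal contract: if the smallest maximizer s̄* of s ↦ δ·π(s) + w(s) on [0,1] equals 0, then the trivial contract is optimal. -/
open Set Filter

/-- The set of maximizers of `x ↦ δ·π(x) + w(x)` on `[0,1]`. -/
def MaxSet (δ : ℝ) (π w : ℝ → ℝ) : Set ℝ :=
  {x | x ∈ Set.Icc (0 : ℝ) 1 ∧ ∀ y ∈ Set.Icc (0 : ℝ) 1, δ * π y + w y ≤ δ * π x + w x}

/-- geometric-weighted summability for bounded sequences -/
lemma summable_geom_mul_of_abs_le {δ : ℝ} (h0 : 0 ≤ δ) (h1 : δ < 1)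
    {x : ℕ → ℝ} {C : ℝ} (hx : ∀ k, |x k| ≤ C) :
    Summable (fun k => δ ^ k * x k) := by
  apply Summable.of_abs
  apply Summable.of_nonneg_of_le (fun k => abs_nonneg _) (fun k => ?_)
    ((summable_geometric_of_lt_one h0 h1).mul_right C)
  rw [abs_mul, abs_pow, abs_of_nonneg h0]
  exact mul_le_mul_of_nonneg_left (hx k) (pow_nonneg h0 k)

/-- Key analytic lemma. -/
lemma aux_key (δ : ℝ) (hδ0 : 0 < δ) (hδ1 : δ < 1) (e q : ℕ → ℝ)
    (he : Monotone e) (hq : Monotone q) (he0 : e 0 = 0) (hq0 : q 0 = 0)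
    (C : ℝ) (hC : ∀ t, e t ≤ C)
    (hcq : ∀ t, q t ≤ (1 - δ) * e t)
    (hkey : ∀ t, e (t+1) - e t + q t ≤ (1 - δ) * ∑' k : ℕ, δ ^ k * q (t + 1 + k)) :
    ∀ t, e t ≤ 0 := by
  have h1δ : 0 < 1 - δ := by linarith
  have hδ0' : (0:ℝ) ≤ δ := le_of_lt hδ0
  have he_nonneg : ∀ t, 0 ≤ e t := fun t => he0 ▸ he (Nat.zero_le t)
  have hq_nonneg : ∀ t, 0 ≤ q t := fun t => hq0 ▸ hq (Nat.zero_le t)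
  have hC0 : 0 ≤ C := (he_nonneg 0).trans (hC 0)
  have hqC : ∀ t, q t ≤ (1 - δ) * C := fun t =>
    (hcq t).trans (mul_le_mul_of_nonneg_left (hC t) h1δ.le)
  have habs : ∀ t, |q t| ≤ (1 - δ) * C := fun t =>
    abs_le.mpr ⟨by nlinarith [hq_nonneg t], hqC t⟩
  have hgeo : Summable (fun k : ℕ => δ ^ k) := summable_geometric_of_lt_one hδ0' hδ1
  have hgeosum : ∑' k : ℕ, δ ^ k = (1 - δ)⁻¹ := tsum_geometric_of_lt_one hδ0' hδ1
  have hQsum : ∀ t, Summable (fun k => δ ^ k * q (t + k)) := fun t =>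
    summable_geom_mul_of_abs_le hδ0' hδ1 (fun k => habs (t + k))
  set Q : ℕ → ℝ := fun t => ∑' k : ℕ, δ ^ k * q (t + k) with hQdef
  have hshift : ∀ t, Q t = q t + δ * Q (t + 1) := by
    intro t
    have h := Summable.tsum_eq_zero_add (hQsum t)
    simp only [pow_zero, one_mul, Nat.add_zero] at h
    have h2 : ∀ k : ℕ, δ ^ (k+1) * q (t + (k+1)) = δ * (δ ^ k * q (t + 1 + k)) := by
      intro k
      rw [pow_succ, show t + (k+1) = t + 1 + k from by omega]; ring
    rw [tsum_congr h2, tsum_mul_left] at h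
    exact h
  -- suprema
  have hbddE : BddAbove (Set.range e) := ⟨C, by rintro _ ⟨t, rfl⟩; exact hC t⟩
  have hbddq : BddAbove (Set.range q) := ⟨(1-δ)*C, by rintro _ ⟨t, rfl⟩; exact hqC t⟩
  set E := ⨆ t, e t with hEdef
  set qI := ⨆ t, q t with hqIdef
  have heE : ∀ t, e t ≤ E := fun t => le_ciSup hbddE t
  have hqqI : ∀ t, q t ≤ qI := fun t => le_ciSup hbddq t
  have hqI_le : qI ≤ (1 - δ) * E :=
    ciSup_le fun t => (hcq t).trans (mul_le_mul_of_nonneg_left (heE t) h1δ.le)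
  -- R
  have hRsum : ∀ t, Summable (fun k => δ ^ k * (qI - q (t + k))) := by
    intro t
    have := (hgeo.mul_right qI).sub (hQsum t)
    exact this.congr (fun k => (mul_sub _ _ _).symm)
  set R : ℕ → ℝ := fun t => ∑' k : ℕ, δ ^ k * (qI - q (t + k)) with hRdef
  have hRQ : ∀ t, R t = (1 - δ)⁻¹ * qI - Q t := by
    intro t
    have h2 : ∀ k : ℕ, δ ^ k * (qI - q (t + k)) = δ ^ k * qI - δ ^ k * q (t + k) :=
      fun k => mul_sub _ _ _
    calc R t = ∑' k : ℕ, (δ ^ k * qI - δ ^ k * q (t + k)) := tsum_congr h2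
    _ = (∑' k : ℕ, δ ^ k * qI) - ∑' k : ℕ, δ ^ k * q (t + k) :=
        Summable.tsum_sub (hgeo.mul_right qI) (hQsum t)
    _ = (1 - δ)⁻¹ * qI - Q t := by rw [tsum_mul_right, hgeosum]
  have hR_nonneg : ∀ t, 0 ≤ R t := fun t =>
    tsum_nonneg (fun k => mul_nonneg (pow_nonneg hδ0' k) (by linarith [hqqI (t + k)]))
  have hR_le : ∀ t, R t ≤ (1 - δ)⁻¹ * (qI - q t) := by
    intro t
    calc R t ≤ ∑' k : ℕ, δ ^ k * (qI - q t) := by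
          apply Summable.tsum_le_tsum _ (hRsum t) (hgeo.mul_right _)
          intro k
          exact mul_le_mul_of_nonneg_left (by linarith [hq (Nat.le_add_right t k)])
            (pow_nonneg hδ0' k)
    _ = (1 - δ)⁻¹ * (qI - q t) := by rw [tsum_mul_right, hgeosum]
  -- c monotone
  have hc : Monotone (fun t => Q t - e t) := by
    apply monotone_nat_of_le_succ
    intro t
    have hk := hkey t
    have hs := hshift t
    have : (1 - δ) * ∑' k : ℕ, δ ^ k * q (t + 1 + k) = (1 - δ) * Q (t + 1) := rfl
    rw [this] at hk
    linarith
  -- limits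
  have he_tendsto : Tendsto e atTop (nhds E) := tendsto_atTop_ciSup he hbddE
  have hq_tendsto : Tendsto q atTop (nhds qI) := tendsto_atTop_ciSup hq hbddq
  have hmid : Tendsto (fun t => (1 - δ)⁻¹ * (qI - q t)) atTop (nhds 0) := by
    have h1 : Tendsto (fun t => qI - q t) atTop (nhds (qI - qI)) :=
      tendsto_const_nhds.sub hq_tendsto
    rw [sub_self] at h1
    simpa using h1.const_mul ((1 - δ)⁻¹)
  have hR_tendsto : Tendsto R atTop (nhds 0) :=
    tendsto_of_tendsto_of_tendsto_of_le_of_le tendsto_const_nhds hmid hR_nonneg hR_le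
  have hQ_tendsto : Tendsto Q atTop (nhds ((1 - δ)⁻¹ * qI)) := by
    have : Q = fun t => (1 - δ)⁻¹ * qI - R t := funext fun t => by
      have := hRQ t; linarith
    rw [this]
    simpa using (tendsto_const_nhds (x := (1 - δ)⁻¹ * qI) (f := atTop)).sub hR_tendsto
  have hc_tendsto : Tendsto (fun t => Q t - e t) atTop (nhds ((1 - δ)⁻¹ * qI - E)) :=
    hQ_tendsto.sub he_tendsto
  have hc0 : Q 0 - e 0 ≤ (1 - δ)⁻¹ * qI - E :=
    ge_of_tendsto' hc_tendsto (fun t => hc (Nat.zero_le t))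
  have hER : E ≤ R 0 := by
    have := hRQ 0
    rw [he0] at hc0
    linarith
  have hEle : E ≤ 0 := by
    by_contra hpos
    push_neg at hpos
    have hN : ∃ N, qI - q N < (1 - δ) * E := by
      by_contra hno
      push_neg at hno
      have hq2 : qI ≤ qI - (1 - δ) * E := ciSup_le (fun t => by linarith [hno t])
      nlinarith
    obtain ⟨N, hNlt⟩ := hN
    have hstrict : R 0 < ∑' k : ℕ, δ ^ k * ((1 - δ) * E) := by
      apply Summable.tsum_lt_tsum (i := N) _ _ (hRsum 0) (hgeo.mul_right _)
      · intro k
        exact mul_le_mul_of_nonneg_left (by linarith [hq_nonneg (0 + k), hqqI (0 + k)])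
          (pow_nonneg hδ0' k)
      · apply mul_lt_mul_of_pos_left _ (pow_pos hδ0 N)
        rw [Nat.zero_add]
        exact hNlt
    have hsumE : ∑' k : ℕ, δ ^ k * ((1 - δ) * E) = E := by
      rw [tsum_mul_right, hgeosum, inv_mul_cancel_left₀ (ne_of_gt h1δ)]
    rw [hsumE] at hstrict
    linarith
  exact fun t => (heE t).trans hEle

/-- If the smallest maximizer of x ↦ δ·π(x) + w(x) on [0,1] is 0,
then the trivial contract is optimal. -/
theorem trivial_optimal_of_sbar_zero
    (δ : ℝ) (hδ : δ ∈ Set.Ioo (0 : ℝ) 1) (π w : ℝ → ℝ)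
    (hπc : ContinuousOn π (Set.Icc 0 1)) (hwc : ContinuousOn w (Set.Icc 0 1))
    (hπm : StrictMonoOn π (Set.Icc 0 1)) (hwa : StrictAntiOn w (Set.Icc 0 1))
    (hGm : StrictMonoOn (fun x => π x + w x) (Set.Icc 0 1))
    (hmax : IsLeast (MaxSet δ π w) 0) :
    Optimal δ π w (fun _ => 0) (fun _ => 0) := by
  obtain ⟨hδ0, hδ1⟩ := hδ
  have hδ0' : (0:ℝ) ≤ δ := hδ0.le
  have h1δ : 0 < 1 - δ := by linarith
  have hgeo : Summable (fun k : ℕ => δ ^ k) := summable_geometric_of_lt_one hδ0' hδ1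
  have hgeosum : ∑' k : ℕ, δ ^ k = (1 - δ)⁻¹ := tsum_geometric_of_lt_one hδ0' hδ1
  have h0mem : (0:ℝ) ∈ Set.Icc (0:ℝ) 1 := ⟨le_rfl, zero_le_one⟩
  have h1mem : (1:ℝ) ∈ Set.Icc (0:ℝ) 1 := ⟨zero_le_one, le_rfl⟩
  -- value of the trivial contract
  have htrivPi : PiVal δ π (fun _ => 0) (fun _ => 0) 0 = (1 - δ)⁻¹ * π 0 := by
    unfold PiVal
    simp only [sub_zero]
    rw [tsum_mul_right, hgeosum]
  constructor
  · -- trivial contract is implementable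
    refine ⟨⟨fun t => h0mem, rfl, by simpa using summable_zero⟩, monotone_const,
      fun t => le_rfl, fun t => ?_, fun t => ?_⟩
    · have : PiVal δ π (fun _ => 0) (fun _ => 0) t = (1 - δ)⁻¹ * π 0 := by
        unfold PiVal
        simp only [sub_zero]
        rw [tsum_mul_right, hgeosum]
      rw [this, div_eq_inv_mul]
    · have : WVal δ w (fun _ => 0) (fun _ => 0) (t + 1) = (1 - δ)⁻¹ * w 0 := by
        unfold WVal
        simp only [add_zero]
        rw [tsum_mul_right, hgeosum]
      rw [this, div_eq_inv_mul]
  · -- optimality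
    intro s p himpl
    obtain ⟨⟨hsIcc, hs0, hpsum⟩, hsm, hp0, hPIC, hEIC⟩ := himpl
    have hπmono : MonotoneOn π (Set.Icc (0:ℝ) 1) := hπm.monotoneOn
    have hwanti : AntitoneOn w (Set.Icc (0:ℝ) 1) := hwa.antitoneOn
    have hGmono : MonotoneOn (fun x => π x + w x) (Set.Icc (0:ℝ) 1) := hGm.monotoneOn
    have hπlb : ∀ t, π 0 ≤ π (s t) := fun t => hπmono h0mem (hsIcc t) (hsIcc t).1
    have hπub : ∀ t, π (s t) ≤ π 1 := fun t => hπmono (hsIcc t) h1mem (hsIcc t).2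
    have hwub : ∀ t, w (s t) ≤ w 0 := fun t => hwanti h0mem (hsIcc t) (hsIcc t).1
    have hwlb : ∀ t, w 1 ≤ w (s t) := fun t => hwanti (hsIcc t) h1mem (hsIcc t).2
    -- summability of shifted payment streams
    have hp_sh : ∀ u : ℕ, Summable (fun k => δ ^ k * p (u + k)) := by
      intro u
      have hδu : δ ^ u ≠ 0 := pow_ne_zero u (ne_of_gt hδ0)
      have h4 := (((summable_nat_add_iff u).mpr hpsum).mul_left ((δ ^ u)⁻¹))
      apply h4.congr
      intro k
      rw [add_comm k u, pow_add, mul_assoc, inv_mul_cancel_left₀ hδu]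
    have hπ_sh : ∀ u : ℕ, Summable (fun k => δ ^ k * π (s (u + k))) := by
      intro u
      apply summable_geom_mul_of_abs_le hδ0' hδ1 (C := |π 0| + |π 1|)
      intro k
      refine abs_le.mpr ⟨?_, ?_⟩
      · have := hπlb (u + k); have := neg_abs_le (π 0); have := abs_nonneg (π 1); linarith
      · have := hπub (u + k); have := le_abs_self (π 1); have := abs_nonneg (π 0); linarith
    have hw_sh : ∀ u : ℕ, Summable (fun k => δ ^ k * w (s (u + k))) := by
      intro u
      apply summable_geom_mul_of_abs_le hδ0' hδ1 (C := |w 0| + |w 1|)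
      intro k
      refine abs_le.mpr ⟨?_, ?_⟩
      · have := hwlb (u + k); have := neg_abs_le (w 1); have := abs_nonneg (w 0); linarith
      · have := hwub (u + k); have := le_abs_self (w 0); have := abs_nonneg (w 1); linarith
    have hq_sh : ∀ u : ℕ, Summable
        (fun k => δ ^ k * (π (s (u + k)) + w (s (u + k)) - (π 0 + w 0))) := by
      intro u
      apply summable_geom_mul_of_abs_le hδ0' hδ1 (C := (π 1 - π 0) + (w 0 - w 1))
      intro k
      refine abs_le.mpr ⟨?_, ?_⟩
      · have h1 := hπlb (u + k); have h2 := hwlb (u + k)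
        have h3 := hπub 0; linarith [hπub (u+k), hwub (u+k)]
      · have h1 := hπub (u + k); have h2 := hwub (u + k)
        linarith [hπlb (u+k), hwlb (u+k)]
    -- main conclusion via aux_key
    have hmain : ∀ t, π (s t) - π 0 ≤ 0 := by
      apply aux_key δ hδ0 hδ1 (fun t => π (s t) - π 0)
        (fun t => π (s t) + w (s t) - (π 0 + w 0)) ?_ ?_ ?_ ?_ (π 1 - π 0) ?_ ?_ ?_
      · intro a b hab
        have := hπmono (hsIcc a) (hsIcc b) (hsm hab)
        simpa using sub_le_sub_right this (π 0)
      · intro a b hab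
        have := hGmono (hsIcc a) (hsIcc b) (hsm hab)
        simp only at this
        simp only
        linarith
      · simp [hs0]
      · simp [hs0]
      · intro t
        linarith [hπub t]
      · intro t
        have := hmax.1.2 (s t) (hsIcc t)
        nlinarith
      · intro t
        have hP := hPIC (t + 1)
        have hE := hEIC t
        have hA : Summable (fun k => δ ^ k * (π (s (t + 1 + k)) - p (t + 1 + k))) :=
          ((hπ_sh (t+1)).sub (hp_sh (t+1))).congr (fun k => (mul_sub _ _ _).symm)
        have hB : Summable (fun k => δ ^ k * (w (s (t + 1 + k)) + p (t + 1 + k))) :=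
          ((hw_sh (t+1)).add (hp_sh (t+1))).congr (fun k => (mul_add _ _ _).symm)
        have hPW : PiVal δ π s p (t+1) + WVal δ w s p (t+1)
            = ∑' k : ℕ, δ ^ k * (π (s (t + 1 + k)) + w (s (t + 1 + k))) := by
          unfold PiVal WVal
          rw [← Summable.tsum_add hA hB]
          exact tsum_congr (fun k => by ring)
        have hsum1 : ∑' k : ℕ, δ ^ k * (π (s (t + 1 + k)) + w (s (t + 1 + k)))
            = (∑' k : ℕ, δ ^ k * (π (s (t + 1 + k)) + w (s (t + 1 + k)) - (π 0 + w 0)))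
              + (1 - δ)⁻¹ * (π 0 + w 0) := by
          have h2 : ∀ k : ℕ, δ ^ k * (π (s (t + 1 + k)) + w (s (t + 1 + k)))
              = δ ^ k * (π (s (t + 1 + k)) + w (s (t + 1 + k)) - (π 0 + w 0))
                + δ ^ k * (π 0 + w 0) := fun k => by ring
          rw [tsum_congr h2, Summable.tsum_add (hq_sh (t+1)) (hgeo.mul_right _), tsum_mul_right,
            hgeosum]
        set S := ∑' k : ℕ, δ ^ k * (π (s (t + 1 + k)) + w (s (t + 1 + k)) - (π 0 + w 0))
          with hSdef
        have hcomb : (π (s (t+1)) + w (s t)) / (1 - δ) ≤ S + (1 - δ)⁻¹ * (π 0 + w 0) := by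
          rw [add_div]
          calc π (s (t+1)) / (1-δ) + w (s t) / (1-δ)
              ≤ PiVal δ π s p (t+1) + WVal δ w s p (t+1) := add_le_add hP hE
          _ = S + (1 - δ)⁻¹ * (π 0 + w 0) := by rw [hPW, hsum1]
        rw [div_le_iff₀ h1δ] at hcomb
        have hexp : (S + (1 - δ)⁻¹ * (π 0 + w 0)) * (1 - δ)
            = (1 - δ) * S + (π 0 + w 0) := by
          field_simp
        rw [hexp] at hcomb
        linarith
    -- conclude
    have hπeq : ∀ k : ℕ, π (s k) = π 0 := fun k => le_antisymm (by linarith [hmain k]) (hπlb k)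
    have hPiv : PiVal δ π s p 0 = (1 - δ)⁻¹ * π 0 - ∑' k : ℕ, δ ^ k * p (0 + k) := by
      unfold PiVal
      have h2 : ∀ k : ℕ, δ ^ k * (π (s (0 + k)) - p (0 + k))
          = δ ^ k * π 0 - δ ^ k * p (0 + k) := fun k => by rw [hπeq (0 + k)]; ring
      rw [tsum_congr h2, Summable.tsum_sub (hgeo.mul_right _) (hp_sh 0), tsum_mul_right, hgeosum]
    have hpnn : 0 ≤ ∑' k : ℕ, δ ^ k * p (0 + k) :=
      tsum_nonneg (fun k => mul_nonneg (pow_nonneg hδ0' k) (hp0 (0 + k)))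
    rw [hPiv, htrivPi]
    linarith
end

section
/- Structure of the optimal contract: suppose the smallest maximizer s̄* of s ↦ δ·π(s) + w(s) on [0,1] satisfies s̄* > 0. Then every optimal contract (s,p) satisfies: (i) s_t < s_{t+1} for all t ≥ 0 (gradual knowledge transfer); (ii) δ·π(s_1) + w(0) = δ·π(s̄*) + w(s̄*); (iii) s_t < s̄* for every t and s_t → s̄* as t → ∞; (iv) p_0 = 0 and p_t = (w(s_{t−1}) − w(s_t))/(1−δ) for all t ≥ 1. -/
open Set Filter

noncomputable def SVal (δ : ℝ) (π w : ℝ → ℝ) (s : ℕ → ℝ) (t : ℕ) : ℝ :=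
  ∑' k : ℕ, δ ^ k * (π (s (t + k)) + w (s (t + k)))

section Helpers
variable {δ : ℝ}

lemma summable_geom_mul (hδ : δ ∈ Set.Ioo (0:ℝ) 1) {a : ℕ → ℝ} {C : ℝ}
    (h : ∀ n, |a n| ≤ C) : Summable fun k => δ ^ k * a k := by
  apply Summable.of_norm_bounded
    (((summable_geometric_of_lt_one hδ.1.le hδ.2)).mul_left C)
  intro k
  rw [Real.norm_eq_abs, abs_mul, abs_pow, abs_of_pos hδ.1, mul_comm]
  exact mul_le_mul_of_nonneg_right (h k) (pow_nonneg hδ.1.le k)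

lemma summable_shift {p : ℕ → ℝ} (hδ0 : 0 < δ) (hp : Summable fun t => δ ^ t * p t) (t : ℕ) :
    Summable fun k => δ ^ k * p (t + k) := by
  have h1 : Summable fun k => δ ^ (t + k) * p (t + k) :=
    hp.comp_injective (add_right_injective t)
  have h2 : Summable fun k => δ ^ t * (δ ^ k * p (t + k)) := by
    simpa [pow_add, mul_assoc] using h1
  exact (summable_mul_left_iff (pow_ne_zero t hδ0.ne')).mp h2

lemma tsum_succ_eq {a : ℕ → ℝ} (hδ0 : 0 < δ) (ha : Summable fun k => δ ^ k * a k) :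
    ∑' k, δ ^ k * a k = a 0 + δ * ∑' k, δ ^ k * a (k + 1) := by
  rw [Summable.tsum_eq_zero_add ha]
  simp only [pow_zero, one_mul, pow_succ]
  rw [← tsum_mul_left]
  congr 1
  exact tsum_congr fun k => by ring

lemma tsum_const_geom (hδ : δ ∈ Set.Ioo (0:ℝ) 1) (c : ℝ) :
    ∑' k : ℕ, δ ^ k * c = c / (1 - δ) := by
  rw [tsum_mul_right, tsum_geometric_of_lt_one hδ.1.le hδ.2]
  rw [div_eq_mul_inv, mul_comm]

lemma tsum_telescope' {g : ℕ → ℝ} (hs : Summable fun k => g k - g (k + 1))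
    (h0 : Tendsto g atTop (nhds 0)) : ∑' k, (g k - g (k + 1)) = g 0 := by
  refine ((hs.hasSum_iff_tendsto_nat).mpr ?_).tsum_eq
  have : ∀ n, ∑ i ∈ Finset.range n, (g i - g (i + 1)) = g 0 - g n := by
    intro n; exact Finset.sum_range_sub' g n
  simp only [this]
  simpa using tendsto_const_nhds.sub h0

lemma summable_telescope (hδ : δ ∈ Set.Ioo (0:ℝ) 1) {x : ℕ → ℝ} {C : ℝ}
    (hb : ∀ n, |x n| ≤ C) :
    Summable fun k => δ ^ k * x k - δ ^ (k + 1) * x (k + 1) := by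
  have h1 := summable_geom_mul hδ hb
  have h2 : Summable fun k => δ ^ (k + 1) * x (k + 1) :=
    h1.comp_injective (fun a b h => by omega)
  exact h1.sub h2

lemma tendsto_geom_mul_zero (hδ : δ ∈ Set.Ioo (0:ℝ) 1) {x : ℕ → ℝ} {C : ℝ}
    (hb : ∀ n, |x n| ≤ C) : Tendsto (fun k => δ ^ k * x k) atTop (nhds 0) := by
  refine squeeze_zero_norm (fun k => ?_)
    (by simpa using (tendsto_pow_atTop_nhds_zero_of_lt_one hδ.1.le hδ.2).const_mul C :
      Tendsto (fun k => C * δ ^ k) atTop (nhds 0))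
  rw [Real.norm_eq_abs, abs_mul, abs_pow, abs_of_pos hδ.1, mul_comm]
  exact mul_le_mul_of_nonneg_right (hb k) (pow_nonneg hδ.1.le k)

lemma tsum_telescope_geom (hδ : δ ∈ Set.Ioo (0:ℝ) 1) {x : ℕ → ℝ} {C : ℝ}
    (hb : ∀ n, |x n| ≤ C) :
    ∑' k, (δ ^ k * x k - δ ^ (k + 1) * x (k + 1)) = x 0 := by
  have := tsum_telescope' (g := fun k => δ ^ k * x k) (summable_telescope hδ hb)
    (tendsto_geom_mul_zero hδ hb)
  simpa using this

end Helpers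

section Contract
variable {δ : ℝ} {π w : ℝ → ℝ} {s p : ℕ → ℝ} {Cπ Cw : ℝ}

lemma summable_pi_part (hδ : δ ∈ Set.Ioo (0:ℝ) 1) (hb : ∀ t, |π (s t)| ≤ Cπ) (t : ℕ) :
    Summable fun k => δ ^ k * π (s (t + k)) :=
  summable_geom_mul hδ (fun k => hb (t + k))

lemma summable_PiVal (hδ : δ ∈ Set.Ioo (0:ℝ) 1) (hb : ∀ t, |π (s t)| ≤ Cπ)
    (hp : Summable fun t => δ ^ t * p t) (t : ℕ) :
    Summable fun k => δ ^ k * (π (s (t + k)) - p (t + k)) := by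
  have h1 := summable_pi_part hδ hb t
  have h2 := summable_shift hδ.1 hp t
  simpa [mul_sub] using h1.sub h2

lemma summable_WVal (hδ : δ ∈ Set.Ioo (0:ℝ) 1) (hb : ∀ t, |w (s t)| ≤ Cw)
    (hp : Summable fun t => δ ^ t * p t) (t : ℕ) :
    Summable fun k => δ ^ k * (w (s (t + k)) + p (t + k)) := by
  have h1 := summable_pi_part (π := w) hδ hb t
  have h2 := summable_shift hδ.1 hp t
  simpa [mul_add] using h1.add h2

lemma summable_SVal (hδ : δ ∈ Set.Ioo (0:ℝ) 1) (hbπ : ∀ t, |π (s t)| ≤ Cπ)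
    (hbw : ∀ t, |w (s t)| ≤ Cw) (t : ℕ) :
    Summable fun k => δ ^ k * (π (s (t + k)) + w (s (t + k))) := by
  have h1 := summable_pi_part hδ hbπ t
  have h2 := summable_pi_part (π := w) hδ hbw t
  simpa [mul_add] using h1.add h2

lemma PiVal_add_WVal (hδ : δ ∈ Set.Ioo (0:ℝ) 1) (hbπ : ∀ t, |π (s t)| ≤ Cπ)
    (hbw : ∀ t, |w (s t)| ≤ Cw) (hp : Summable fun t => δ ^ t * p t) (t : ℕ) :
    PiVal δ π s p t + WVal δ w s p t = SVal δ π w s t := by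
  unfold PiVal WVal SVal
  rw [← Summable.tsum_add (summable_PiVal hδ hbπ hp t) (summable_WVal hδ hbw hp t)]
  exact tsum_congr fun k => by ring

lemma PiVal_rec (hδ : δ ∈ Set.Ioo (0:ℝ) 1) (hbπ : ∀ t, |π (s t)| ≤ Cπ)
    (hp : Summable fun t => δ ^ t * p t) (t : ℕ) :
    PiVal δ π s p t = (π (s t) - p t) + δ * PiVal δ π s p (t + 1) := by
  unfold PiVal
  rw [tsum_succ_eq hδ.1 (summable_PiVal hδ hbπ hp t)]
  have hidx : ∀ k : ℕ, t + 1 + k = t + (k + 1) := fun k => by omega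
  simp only [hidx, add_zero]

lemma WVal_rec (hδ : δ ∈ Set.Ioo (0:ℝ) 1) (hbw : ∀ t, |w (s t)| ≤ Cw)
    (hp : Summable fun t => δ ^ t * p t) (t : ℕ) :
    WVal δ w s p t = (w (s t) + p t) + δ * WVal δ w s p (t + 1) := by
  unfold WVal
  rw [tsum_succ_eq hδ.1 (summable_WVal hδ hbw hp t)]
  have hidx : ∀ k : ℕ, t + 1 + k = t + (k + 1) := fun k => by omega
  simp only [hidx, add_zero]

lemma SVal_rec (hδ : δ ∈ Set.Ioo (0:ℝ) 1) (hbπ : ∀ t, |π (s t)| ≤ Cπ)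
    (hbw : ∀ t, |w (s t)| ≤ Cw) (t : ℕ) :
    SVal δ π w s t = (π (s t) + w (s t)) + δ * SVal δ π w s (t + 1) := by
  unfold SVal
  rw [tsum_succ_eq hδ.1 (summable_SVal hδ hbπ hbw t)]
  have hidx : ∀ k : ℕ, t + 1 + k = t + (k + 1) := fun k => by omega
  simp only [hidx, add_zero]

lemma WVal_binding (hδ : δ ∈ Set.Ioo (0:ℝ) 1) {q : ℕ → ℝ} (hbw : ∀ t, |w (s t)| ≤ Cw)
    (hq : ∀ n, q (n + 1) = (w (s n) - w (s (n + 1))) / (1 - δ)) (t : ℕ) :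
    WVal δ w s q (t + 1) = w (s t) / (1 - δ) := by
  have h1δ : (0:ℝ) < 1 - δ := by linarith [hδ.2]
  have key : (1 - δ) * WVal δ w s q (t + 1) = w (s t) := by
    unfold WVal
    rw [← tsum_mul_left]
    have hterm : ∀ k : ℕ, (1 - δ) * (δ ^ k * (w (s (t + 1 + k)) + q (t + 1 + k)))
        = δ ^ k * w (s (t + k)) - δ ^ (k + 1) * w (s (t + (k + 1))) := by
      intro k
      have h2 := hq (t + k)
      rw [show t + 1 + k = (t + k) + 1 from by omega, h2,
        show t + k + 1 = t + (k + 1) from by omega]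
      field_simp
      ring
    rw [tsum_congr hterm]
    simpa using tsum_telescope_geom hδ (x := fun k => w (s (t + k))) (fun n => hbw (t + n))
  field_simp [h1δ.ne'] at key ⊢
  linarith [key]

lemma SVal_binding (hδ : δ ∈ Set.Ioo (0:ℝ) 1) {G : ℝ} (hbπ : ∀ t, |π (s t)| ≤ Cπ)
    (hrec : ∀ n, δ * π (s (n + 1)) + w (s n) = G) (t : ℕ) :
    SVal δ π w s t = π (s t) + G / (1 - δ) := by
  unfold SVal
  have hterm : ∀ k : ℕ, δ ^ k * (π (s (t + k)) + w (s (t + k)))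
      = (δ ^ k * π (s (t + k)) - δ ^ (k + 1) * π (s (t + (k + 1)))) + δ ^ k * G := by
    intro k
    have h2 := hrec (t + k)
    have hw : w (s (t + k)) = G - δ * π (s (t + (k + 1))) := by
      rw [show t + (k + 1) = (t + k) + 1 from by omega]; linarith
    rw [hw]; ring
  rw [tsum_congr hterm,
    Summable.tsum_add (summable_telescope hδ (x := fun k => π (s (t + k))) (fun n => hbπ (t + n)))
      (summable_geom_mul hδ (a := fun _ => G) (fun _ => le_refl |G|)),
    tsum_const_geom hδ]
  have := tsum_telescope_geom hδ (x := fun k => π (s (t + k))) (fun n => hbπ (t + n))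
  simp only [add_zero] at this
  rw [this]

end Contract

section Step
variable {δ : ℝ} {π w : ℝ → ℝ} {sbar : ℝ}

lemma step_lt (hδ : δ ∈ Set.Ioo (0:ℝ) 1) (hπm : StrictMonoOn π (Set.Icc 0 1))
    (hwa : StrictAntiOn w (Set.Icc 0 1)) (hsbar : IsLeast (MaxSet δ π w) sbar)
    {x y : ℝ} (hx : x ∈ Set.Icc (0:ℝ) 1) (hy : y ∈ Set.Icc (0:ℝ) 1) (hxlt : x < sbar)
    (heq : δ * π y + w x = δ * π sbar + w sbar) : x < y ∧ y < sbar := by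
  have hsmem : sbar ∈ Set.Icc (0:ℝ) 1 := hsbar.1.1
  have hgx : δ * π x + w x < δ * π sbar + w sbar := by
    rcases lt_or_eq_of_le (hsbar.1.2 x hx) with h | h
    · exact h
    · exact absurd (hsbar.2 ⟨hx, fun z hz => h ▸ hsbar.1.2 z hz⟩) (not_le.2 hxlt)
  have h1 : π x < π y := by nlinarith [hδ.1]
  have h2 : π y < π sbar := by
    have hw : w sbar < w x := hwa hx hsmem hxlt
    nlinarith [hδ.1]
  exact ⟨(hπm.lt_iff_lt hx hy).mp h1, (hπm.lt_iff_lt hy hsmem).mp h2⟩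

lemma step_exists (hδ : δ ∈ Set.Ioo (0:ℝ) 1) (hπc : ContinuousOn π (Set.Icc 0 1))
    (hwa : StrictAntiOn w (Set.Icc 0 1)) (hsbar : IsLeast (MaxSet δ π w) sbar)
    {x : ℝ} (hx : x ∈ Set.Icc (0:ℝ) 1) (hxlt : x < sbar) :
    ∃ y ∈ Set.Icc (0:ℝ) 1, δ * π y + w x = δ * π sbar + w sbar := by
  have hsmem : sbar ∈ Set.Icc (0:ℝ) 1 := hsbar.1.1
  have hxs : x ≤ sbar := hxlt.le
  have hsub : Set.Icc x sbar ⊆ Set.Icc (0:ℝ) 1 := Set.Icc_subset_Icc hx.1 hsmem.2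
  have hIVT := intermediate_value_Icc hxs (hπc.mono hsub)
  set v : ℝ := (δ * π sbar + w sbar - w x) / δ with hv
  have hv1 : π x ≤ v := by
    have := hsbar.1.2 x hx
    rw [hv, le_div_iff₀ hδ.1]
    nlinarith
  have hv2 : v ≤ π sbar := by
    have hwle : w sbar ≤ w x := (hwa.antitoneOn hx hsmem) hxs
    rw [hv, div_le_iff₀ hδ.1]
    nlinarith
  obtain ⟨y, hymem, hyv⟩ := hIVT ⟨hv1, hv2⟩
  refine ⟨y, hsub hymem, ?_⟩
  rw [hyv, hv, mul_div_assoc', mul_comm, mul_div_assoc, div_self hδ.1.ne', mul_one]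
  ring

/-- Structure of the optimal contract when the smallest maximizer sbar is positive. -/
theorem optimal_contract_structure
    (δ : ℝ) (hδ : δ ∈ Set.Ioo (0 : ℝ) 1) (π w : ℝ → ℝ)
    (hπc : ContinuousOn π (Set.Icc 0 1)) (hwc : ContinuousOn w (Set.Icc 0 1))
    (hπm : StrictMonoOn π (Set.Icc 0 1)) (hwa : StrictAntiOn w (Set.Icc 0 1))
    (hGm : StrictMonoOn (fun x => π x + w x) (Set.Icc 0 1))
    (sbar : ℝ) (hsbar : IsLeast (MaxSet δ π w) sbar) (hpos : 0 < sbar)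
    (s p : ℕ → ℝ) (hopt : Optimal δ π w s p) :
    (∀ t : ℕ, s t < s (t + 1)) ∧
    (δ * π (s 1) + w 0 = δ * π sbar + w sbar) ∧
    (∀ t : ℕ, s t < sbar) ∧ Tendsto s atTop (nhds sbar) ∧
    p 0 = 0 ∧ (∀ t : ℕ, 1 ≤ t → p t = (w (s (t - 1)) - w (s t)) / (1 - δ)) := by
  obtain ⟨hδ0, hδ1⟩ := hδ
  have hδ' : δ ∈ Set.Ioo (0:ℝ) 1 := ⟨hδ0, hδ1⟩
  have h1δ : (0:ℝ) < 1 - δ := by linarith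
  obtain ⟨himpl, hoptmax⟩ := hopt
  obtain ⟨⟨hsIcc, hs0, hpsum⟩, hsmono, hppos, hPIC, hEIC⟩ := himpl
  obtain ⟨Cπ, hCπ⟩ := isCompact_Icc.exists_bound_of_continuousOn hπc
  obtain ⟨Cw, hCw⟩ := isCompact_Icc.exists_bound_of_continuousOn hwc
  set gstar := δ * π sbar + w sbar with hgstar
  have hsbarIcc := hsbar.1.1
  have hmax : ∀ y ∈ Set.Icc (0:ℝ) 1, δ * π y + w y ≤ gstar := hsbar.1.2
  have hleast : ∀ x ∈ Set.Icc (0:ℝ) 1, δ * π x + w x = gstar → sbar ≤ x :=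
    fun x hx he => hsbar.2 ⟨hx, fun z hz => he ▸ hmax z hz⟩
  have h01 : (0:ℝ) ∈ Set.Icc (0:ℝ) 1 := ⟨le_refl 0, zero_le_one⟩
  clear_value gstar
  have hπb : ∀ t, |π (s t)| ≤ Cπ := fun t => by simpa using hCπ _ (hsIcc t)
  have hwb : ∀ t, |w (s t)| ≤ Cw := fun t => by simpa using hCw _ (hsIcc t)
  -- the limit L of s
  have hbdd : BddAbove (Set.range s) := ⟨1, by rintro _ ⟨t, rfl⟩; exact (hsIcc t).2⟩
  set L := ⨆ t, s t with hL
  have hsL : ∀ t, s t ≤ L := fun t => le_ciSup hbdd t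
  have htend : Tendsto s atTop (nhds L) := tendsto_atTop_ciSup hsmono hbdd
  have hLIcc : L ∈ Set.Icc (0:ℝ) 1 :=
    ⟨le_trans (hsIcc 0).1 (hsL 0), ciSup_le fun t => (hsIcc t).2⟩
  have hLsup : ∀ b : ℝ, (∀ t, s t ≤ b) → L ≤ b := fun b hb => ciSup_le hb
  clear_value L
  have hfm : MonotoneOn (fun x => π x + w x) (Set.Icc (0:ℝ) 1) := hGm.monotoneOn
  have hSub : ∀ t, SVal δ π w s t ≤ (π L + w L) / (1 - δ) := by
    intro t
    rw [← tsum_const_geom hδ' (π L + w L)]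
    refine Summable.tsum_le_tsum (fun k => ?_) (summable_SVal hδ' hπb hwb t)
      (summable_geom_mul hδ' (a := fun _ => π L + w L) fun _ => le_refl _)
    exact mul_le_mul_of_nonneg_left (hfm (hsIcc _) hLIcc (hsL _)) (pow_nonneg hδ0.le k)
  have hSlb : ∀ t, (π (s t) + w (s t)) / (1 - δ) ≤ SVal δ π w s t := by
    intro t
    rw [← tsum_const_geom hδ' (π (s t) + w (s t))]
    refine Summable.tsum_le_tsum (fun k => ?_)
      (summable_geom_mul hδ' (a := fun _ => π (s t) + w (s t)) fun _ => le_refl _)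
      (summable_SVal hδ' hπb hwb t)
    exact mul_le_mul_of_nonneg_left (hfm (hsIcc t) (hsIcc _) (hsmono (Nat.le_add_right t k)))
      (pow_nonneg hδ0.le k)
  have hsub' : Tendsto s atTop (nhdsWithin L (Set.Icc 0 1)) :=
    tendsto_nhdsWithin_of_tendsto_nhds_of_eventually_within s htend (Eventually.of_forall hsIcc)
  have hπL : Tendsto (fun t => π (s t)) atTop (nhds (π L)) := (hπc L hLIcc).tendsto.comp hsub'
  have hwL : Tendsto (fun t => w (s t)) atTop (nhds (w L)) := (hwc L hLIcc).tendsto.comp hsub'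
  have hStend : Tendsto (fun t => SVal δ π w s t) atTop (nhds ((π L + w L) / (1 - δ))) :=
    tendsto_of_tendsto_of_tendsto_of_le_of_le ((hπL.add hwL).div_const (1-δ))
      tendsto_const_nhds hSlb hSub
  -- the slack sequence E
  set E : ℕ → ℝ := fun t => SVal δ π w s t - π (s t) - gstar / (1 - δ) with hE
  clear_value E
  have hErec : ∀ t, E t = (δ * π (s (t+1)) + w (s t) - gstar) + δ * E (t+1) := by
    intro t
    have hgdiv : δ * (gstar / (1 - δ)) - gstar / (1 - δ) = -gstar := by field_simp; ring
    simp only [hE]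
    rw [SVal_rec hδ' hπb hwb t]
    ring_nf
    ring_nf at hgdiv
    linarith [hgdiv]
  have hC : ∀ t, (π (s (t+1)) + w (s t)) / (1-δ) ≤ SVal δ π w s (t+1) := by
    intro t
    have h1 := hPIC (t+1)
    have h2 := hEIC t
    have h3 := PiVal_add_WVal hδ' hπb hwb hpsum (t+1)
    have h4 := add_le_add h1 h2
    rw [← add_div] at h4
    linarith
  have hEmono : Monotone E := by
    apply monotone_nat_of_le_succ
    intro t
    have h1 := hC t
    rw [div_le_iff₀ h1δ] at h1
    have h2 := hErec t
    have h3 : (1-δ) * E (t+1) = (1-δ) * SVal δ π w s (t+1) - (1-δ) * π (s (t+1))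
        - (1-δ) * (gstar/(1-δ)) := by simp only [hE]; ring
    have h4 : (1-δ) * (gstar/(1-δ)) = gstar := by field_simp
    ring_nf at h1 h2 h3 h4 ⊢
    linarith
  have hℓ : Tendsto E atTop (nhds ((δ * π L + w L - gstar)/(1-δ))) := by
    have h0 : Tendsto (fun t => SVal δ π w s t - π (s t) - gstar/(1-δ)) atTop
        (nhds ((π L + w L)/(1-δ) - π L - gstar/(1-δ))) :=
      (hStend.sub hπL).sub tendsto_const_nhds
    have he : (π L + w L)/(1-δ) - π L - gstar/(1-δ) = (δ * π L + w L - gstar)/(1-δ) := by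
      field_simp; ring
    rw [hE]
    exact he ▸ h0
  have hEle : ∀ t, E t ≤ (δ * π L + w L - gstar)/(1-δ) := fun t => hEmono.ge_of_tendsto hℓ t
  have hℓnp : (δ * π L + w L - gstar)/(1-δ) ≤ 0 :=
    div_nonpos_of_nonpos_of_nonneg (by linarith [hmax L hLIcc]) h1δ.le
  -- construction of the comparison contract (σ, q)
  have hstep_all : ∀ x : ℝ, ∃ y, (x ∈ Set.Icc (0:ℝ) 1 ∧ x < sbar) →
      (y ∈ Set.Icc (0:ℝ) 1 ∧ δ * π y + w x = gstar) := by
    intro x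
    by_cases h : x ∈ Set.Icc (0:ℝ) 1 ∧ x < sbar
    · obtain ⟨y, hy1, hy2⟩ := step_exists hδ' hπc hwa hsbar h.1 h.2
      exact ⟨y, fun _ => ⟨hy1, by rw [hgstar]; exact hy2⟩⟩
    · exact ⟨0, fun hc => absurd hc h⟩
  choose nxt hnxt using hstep_all
  set σ : ℕ → ℝ := fun n => Nat.rec (0:ℝ) (fun _ ih => nxt ih) n with hσdef
  have hσ0 : σ 0 = 0 := rfl
  have hσs : ∀ n, σ (n+1) = nxt (σ n) := fun n => rfl
  clear_value σ
  have hσinv : ∀ n, σ n ∈ Set.Icc (0:ℝ) 1 ∧ σ n < sbar := by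
    intro n
    induction n with
    | zero => exact ⟨hσ0 ▸ h01, hσ0 ▸ hpos⟩
    | succ n ih =>
      have h := hnxt (σ n) ih
      rw [hσs n]
      exact ⟨h.1, (step_lt hδ' hπm hwa hsbar ih.1 h.1 ih.2 (hgstar ▸ h.2)).2⟩
  have hσrec : ∀ n, δ * π (σ (n+1)) + w (σ n) = gstar := fun n => by
    rw [hσs n]; exact (hnxt (σ n) (hσinv n)).2
  have hσlt : ∀ n, σ n < σ (n+1) := fun n =>
    (step_lt hδ' hπm hwa hsbar (hσinv n).1 (hσinv (n+1)).1 (hσinv n).2 (hgstar ▸ hσrec n)).1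
  have hσmono : Monotone σ := monotone_nat_of_le_succ fun n => (hσlt n).le
  have hσπb : ∀ t, |π (σ t)| ≤ Cπ := fun t => by simpa using hCπ _ (hσinv t).1
  have hσwb : ∀ t, |w (σ t)| ≤ Cw := fun t => by simpa using hCw _ (hσinv t).1
  set q : ℕ → ℝ := fun n => Nat.casesOn n (0:ℝ) (fun m => (w (σ m) - w (σ (m+1))) / (1-δ))
    with hqdef
  have hq0 : q 0 = 0 := rfl
  have hqs : ∀ n, q (n+1) = (w (σ n) - w (σ (n+1))) / (1-δ) := fun n => rfl
  clear_value q
  have hqnn : ∀ n, 0 ≤ q n := by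
    intro n; cases n with
    | zero => rw [hq0]
    | succ m =>
      rw [hqs]
      exact div_nonneg (sub_nonneg.2 (hwa (hσinv m).1 (hσinv (m+1)).1 (hσlt m)).le) h1δ.le
  have hCw0 : 0 ≤ Cw := le_trans (abs_nonneg _) (hσwb 0)
  have hqb : ∀ n, |q n| ≤ (Cw + Cw) / (1-δ) := by
    intro n; cases n with
    | zero => rw [hq0]; simpa using div_nonneg (by linarith) h1δ.le
    | succ m =>
      rw [hqs, abs_div, abs_of_pos h1δ]
      have habs : |w (σ m) - w (σ (m+1))| ≤ Cw + Cw :=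
        (abs_sub _ _).trans (add_le_add (hσwb m) (hσwb (m+1)))
      exact div_le_div_of_nonneg_right habs h1δ.le
  have hqsum : Summable fun t => δ ^ t * q t := summable_geom_mul hδ' hqb
  have hWσs : ∀ t, WVal δ w σ q (t+1) = w (σ t) / (1-δ) := fun t => WVal_binding hδ' hσwb hqs t
  have hWσ0 : WVal δ w σ q 0 = w 0 / (1-δ) := by
    rw [WVal_rec hδ' hσwb hqsum 0, hWσs 0, hσ0, hq0]
    field_simp
    ring
  have hSσ : ∀ t, SVal δ π w σ t = π (σ t) + gstar / (1-δ) := fun t =>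
    SVal_binding hδ' hσπb hσrec t
  have hPiσ : ∀ t, PiVal δ π σ q t = SVal δ π w σ t - WVal δ w σ q t := fun t => by
    have := PiVal_add_WVal hδ' hσπb hσwb hqsum t; linarith
  have auxdiv : ∀ a b : ℝ, δ * a + b ≤ gstar → a / (1-δ) ≤ a + gstar/(1-δ) - b/(1-δ) := by
    intro a b h
    have he : a + gstar/(1-δ) - b/(1-δ) - a/(1-δ) = (gstar - δ*a - b)/(1-δ) := by
      field_simp; ring
    have hnn := div_nonneg (by linarith : (0:ℝ) ≤ gstar - δ*a - b) h1δ.le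
    linarith
  have himplσ : Implementable δ π w σ q := by
    refine ⟨⟨fun t => (hσinv t).1, hσ0, hqsum⟩, hσmono, hqnn, ?_, ?_⟩
    · intro t
      cases t with
      | zero =>
        rw [hPiσ 0, hSσ 0, hWσ0, hσ0]
        exact auxdiv (π 0) (w 0) (hmax 0 h01)
      | succ m =>
        rw [hPiσ (m+1), hSσ (m+1), hWσs m]
        exact auxdiv _ _ (le_of_eq (hσrec m))
    · intro t; rw [hWσs t]
  -- equality chain from optimality
  have hchain := hoptmax σ q himplσ
  have hPiσ0 : PiVal δ π σ q 0 = π 0 + gstar/(1-δ) - w 0/(1-δ) := by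
    rw [hPiσ 0, hSσ 0, hWσ0, hσ0]
  have hSW : PiVal δ π s p 0 + WVal δ w s p 0 = SVal δ π w s 0 :=
    PiVal_add_WVal hδ' hπb hwb hpsum 0
  have hW0ge : w 0 / (1-δ) ≤ WVal δ w s p 0 := by
    have h1 := WVal_rec hδ' hwb hpsum 0
    have h2 := hEIC 0
    rw [hs0] at h2
    have h3 : w 0 + δ * (w 0 / (1-δ)) = w 0/(1-δ) := by field_simp; ring
    have h4 : δ * (w 0/(1-δ)) ≤ δ * WVal δ w s p 1 := mul_le_mul_of_nonneg_left h2 hδ0.le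
    rw [h1, hs0]
    have h5 := hppos 0
    linarith
  have hE0def : E 0 = SVal δ π w s 0 - π 0 - gstar/(1-δ) := by simp only [hE]; rw [hs0]
  have hE0nn : 0 ≤ E 0 := by
    rw [hPiσ0] at hchain
    linarith [hSW, hW0ge, hE0def]
  have hle0 : (δ * π L + w L - gstar)/(1-δ) = 0 :=
    le_antisymm hℓnp (le_trans hE0nn (hEle 0))
  have hEz : ∀ t, E t = 0 := fun t =>
    le_antisymm (by rw [← hle0]; exact hEle t) (le_trans hE0nn (hEmono (Nat.zero_le t)))
  have hbind : ∀ t, δ * π (s (t+1)) + w (s t) = gstar := by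
    intro t
    have h := hErec t
    rw [hEz t, hEz (t+1)] at h
    linarith
  have hgL : δ * π L + w L = gstar := by
    have h := hle0
    rw [div_eq_zero_iff] at h
    rcases h with h | h
    · linarith
    · linarith
  have hslt : ∀ t, s t < sbar := by
    intro t
    induction t with
    | zero => rw [hs0]; exact hpos
    | succ n ih => exact (step_lt hδ' hπm hwa hsbar (hsIcc n) (hsIcc (n+1)) ih (hgstar ▸ hbind n)).2
  have hinc : ∀ t, s t < s (t+1) := fun t =>
    (step_lt hδ' hπm hwa hsbar (hsIcc t) (hsIcc (t+1)) (hslt t) (hgstar ▸ hbind t)).1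
  have hLsbar : L = sbar := le_antisymm (hLsup sbar fun t => (hslt t).le) (hleast L hLIcc hgL)
  -- payments
  have hSone : ∀ t, SVal δ π w s t = π (s t) + gstar/(1-δ) := by
    intro t; have h := hEz t; simp only [hE] at h; linarith
  have hWub : ∀ t, WVal δ w s p (t+1) ≤ w (s t)/(1-δ) := by
    intro t
    have h1 := hPIC (t+1)
    have h2 := PiVal_add_WVal hδ' hπb hwb hpsum (t+1)
    have h3 := hSone (t+1)
    have h4 : π (s (t+1)) + gstar/(1-δ) - π (s (t+1))/(1-δ) = w (s t)/(1-δ) := by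
      rw [← hbind t]; field_simp; ring
    linarith
  have hWeq : ∀ t, WVal δ w s p (t+1) = w (s t)/(1-δ) := fun t =>
    le_antisymm (hWub t) (hEIC t)
  have hW0le : WVal δ w s p 0 ≤ w 0/(1-δ) := by
    rw [hPiσ0] at hchain
    have h3 := hSone 0; rw [hs0] at h3
    linarith [hSW]
  have hW0eq : WVal δ w s p 0 = w 0/(1-δ) := le_antisymm hW0le hW0ge
  have hp0 : p 0 = 0 := by
    have h1 := WVal_rec hδ' hwb hpsum 0
    rw [hW0eq, hWeq 0, hs0] at h1
    have h3 : w 0 + δ * (w 0 / (1-δ)) = w 0/(1-δ) := by field_simp; ring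
    linarith
  have hpt : ∀ t, p (t+1) = (w (s t) - w (s (t+1)))/(1-δ) := by
    intro t
    have h1 := WVal_rec hδ' hwb hpsum (t+1)
    rw [hWeq t, hWeq (t+1)] at h1
    have h3 : (w (s t) - w (s (t+1)))/(1-δ)
        = w (s t)/(1-δ) - w (s (t+1)) - δ*(w (s (t+1))/(1-δ)) := by field_simp; ring
    linarith
  refine ⟨hinc, ?_, fun t => hslt t, hLsbar ▸ htend, hp0, ?_⟩
  · have h := hbind 0
    rw [hs0] at h
    exact h
  · intro t ht
    cases t with
    | zero => omega
    | succ m => simpa using hpt m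
end Step
end

section
/- Uniform dominance of the optimal knowledge sequence: if (s,p) is an implementable contract and (s*,p*) is an optimal contract, then s_t ≤ s*_t for every t. -/
open Set Filter

/-! ### Auxiliary lemmas -/

lemma okd_summable_bdd {δ : ℝ} (hδ0 : 0 ≤ δ) (hδ1 : δ < 1) {f : ℕ → ℝ} {C : ℝ}
    (hf : ∀ n, |f n| ≤ C) : Summable fun k => δ ^ k * f k := by
  apply Summable.of_norm_bounded (g := fun k => C * δ ^ k)
    ((summable_geometric_of_lt_one hδ0 hδ1).mul_left C)
  intro k
  have hp : (0:ℝ) ≤ δ ^ k := pow_nonneg hδ0 k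
  calc ‖δ ^ k * f k‖ = δ ^ k * |f k| := by
        rw [Real.norm_eq_abs, abs_mul, abs_of_nonneg hp]
    _ ≤ δ ^ k * C := mul_le_mul_of_nonneg_left (hf k) hp
    _ = C * δ ^ k := mul_comm _ _

lemma okd_bound {h : ℝ → ℝ} (hc : ContinuousOn h (Icc 0 1)) {s : ℕ → ℝ}
    (hs : ∀ t, s t ∈ Icc (0:ℝ) 1) : ∃ C, ∀ n, |h (s n)| ≤ C := by
  obtain ⟨C, hC⟩ := isCompact_Icc.exists_bound_of_continuousOn hc
  exact ⟨C, fun n => hC _ (hs n)⟩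

lemma okd_summable_shift {δ : ℝ} (hδ0 : 0 < δ) {p : ℕ → ℝ}
    (hp : Summable fun t => δ ^ t * p t) (t : ℕ) :
    Summable fun k => δ ^ k * p (t + k) := by
  have h1 : Summable fun k => δ ^ (k + t) * p (k + t) :=
    (summable_nat_add_iff t).2 hp
  have h2 := h1.mul_left ((δ ^ t)⁻¹)
  refine h2.congr fun k => ?_
  have hne : (δ:ℝ) ^ t ≠ 0 := ne_of_gt (pow_pos hδ0 t)
  rw [add_comm t k]
  field_simp [pow_add]
  ring

lemma okd_summable_comp {δ : ℝ} (hδ0 : 0 < δ) (hδ1 : δ < 1) {h : ℝ → ℝ}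
    (hc : ContinuousOn h (Icc 0 1)) {s : ℕ → ℝ} (hs : ∀ t, s t ∈ Icc (0:ℝ) 1) (t : ℕ) :
    Summable fun k => δ ^ k * h (s (t + k)) := by
  obtain ⟨C, hC⟩ := okd_bound hc hs
  exact okd_summable_bdd hδ0.le hδ1 (fun n => hC (t + n))

lemma okd_summable_sub {δ : ℝ} (hδ0 : 0 < δ) (hδ1 : δ < 1) {h : ℝ → ℝ}
    (hc : ContinuousOn h (Icc 0 1)) {s p : ℕ → ℝ} (hs : ∀ t, s t ∈ Icc (0:ℝ) 1)
    (hp : Summable fun t => δ ^ t * p t) (t : ℕ) :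
    Summable fun k => δ ^ k * (h (s (t + k)) - p (t + k)) := by
  have := (okd_summable_comp hδ0 hδ1 hc hs t).sub (okd_summable_shift hδ0 hp t)
  exact this.congr fun k => by ring

lemma okd_summable_add {δ : ℝ} (hδ0 : 0 < δ) (hδ1 : δ < 1) {h : ℝ → ℝ}
    (hc : ContinuousOn h (Icc 0 1)) {s p : ℕ → ℝ} (hs : ∀ t, s t ∈ Icc (0:ℝ) 1)
    (hp : Summable fun t => δ ^ t * p t) (t : ℕ) :
    Summable fun k => δ ^ k * (h (s (t + k)) + p (t + k)) := by
  have := (okd_summable_comp hδ0 hδ1 hc hs t).add (okd_summable_shift hδ0 hp t)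
  exact this.congr fun k => by ring

lemma okd_summable_G {δ : ℝ} (hδ0 : 0 < δ) (hδ1 : δ < 1) {π w : ℝ → ℝ}
    (hπc : ContinuousOn π (Icc 0 1)) (hwc : ContinuousOn w (Icc 0 1))
    {s : ℕ → ℝ} (hs : ∀ t, s t ∈ Icc (0:ℝ) 1) (t : ℕ) :
    Summable fun k => δ ^ k * (π (s (t + k)) + w (s (t + k))) := by
  have := (okd_summable_comp hδ0 hδ1 hπc hs t).add (okd_summable_comp hδ0 hδ1 hwc hs t)
  exact this.congr fun k => by ring

/-- one-step recursion for sums of the form `∑' k, δ^k * g (t+k)`. -/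
lemma okd_tsum_rec {δ : ℝ} {g : ℕ → ℝ} (t : ℕ)
    (h1 : Summable fun k => δ ^ k * g (t + k)) :
    ∑' k, δ ^ k * g (t + k) = g t + δ * ∑' k, δ ^ k * g (t + 1 + k) := by
  rw [Summable.tsum_eq_zero_add h1]
  simp only [pow_zero, one_mul, add_zero]
  congr 1
  rw [← tsum_mul_left]
  congr 1
  funext k
  have : t + (k + 1) = t + 1 + k := by ring
  rw [this]
  ring

lemma okd_tsum_telescope {f : ℕ → ℝ} (hf : Summable f) :
    ∑' k, (f k - f (k + 1)) = f 0 := by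
  have h1 : Summable fun k => f (k + 1) := (summable_nat_add_iff 1).2 hf
  rw [Summable.tsum_sub hf h1, Summable.tsum_eq_zero_add hf]
  ring

/-- surplus identity: `Π_t + W_t = ∑ δ^k G(s_{t+k})` where `G = π + w`. -/
lemma okd_sum_identity {δ : ℝ} (hδ0 : 0 < δ) (hδ1 : δ < 1) {π w : ℝ → ℝ}
    (hπc : ContinuousOn π (Icc 0 1)) (hwc : ContinuousOn w (Icc 0 1))
    {s p : ℕ → ℝ} (hs : ∀ t, s t ∈ Icc (0:ℝ) 1)
    (hp : Summable fun t => δ ^ t * p t) (t : ℕ) :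
    PiVal δ π s p t + WVal δ w s p t
      = ∑' k : ℕ, δ ^ k * (π (s (t + k)) + w (s (t + k))) := by
  rw [PiVal, WVal,
    ← Summable.tsum_add (okd_summable_sub hδ0 hδ1 hπc hs hp t) (okd_summable_add hδ0 hδ1 hwc hs hp t)]
  exact tsum_congr fun k => by ring
/-- The necessary condition (N): adding (E-IC) at `t` and (P-IC) at `t+1`. -/
lemma okd_necessary {δ : ℝ} (hδ : δ ∈ Ioo (0:ℝ) 1) {π w : ℝ → ℝ}
    (hπc : ContinuousOn π (Icc 0 1)) (hwc : ContinuousOn w (Icc 0 1))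
    {s p : ℕ → ℝ} (himp : Implementable δ π w s p) (t : ℕ) :
    (π (s (t + 1)) + w (s t)) / (1 - δ)
      ≤ ∑' k : ℕ, δ ^ k * (π (s (t + 1 + k)) + w (s (t + 1 + k))) := by
  obtain ⟨⟨hs, hs0, hp⟩, hmono, hpnn, hPIC, hEIC⟩ := himp
  have hid := okd_sum_identity hδ.1 hδ.2 hπc hwc hs hp (t + 1)
  have h1 := hPIC (t + 1)
  have h2 := hEIC t
  rw [add_div]
  linarith

/-- Upper bound on the principal's profit for any implementable contract. -/
lemma okd_upper {δ : ℝ} (hδ : δ ∈ Ioo (0:ℝ) 1) {π w : ℝ → ℝ}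
    (hπc : ContinuousOn π (Icc 0 1)) (hwc : ContinuousOn w (Icc 0 1))
    {s p : ℕ → ℝ} (himp : Implementable δ π w s p) :
    PiVal δ π s p 0
      ≤ (∑' k : ℕ, δ ^ k * (π (s (0 + k)) + w (s (0 + k)))) - w (s 0) / (1 - δ) := by
  obtain ⟨⟨hs, hs0, hp⟩, hmono, hpnn, hPIC, hEIC⟩ := himp
  have hid := okd_sum_identity hδ.1 hδ.2 hπc hwc hs hp 0
  -- W_0 = (w s0 + p0) + δ W_1 ≥ w s0 + δ * w s0/(1-δ) = w s0 / (1-δ)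
  have hrec : WVal δ w s p 0 = (w (s 0) + p 0) + δ * WVal δ w s p 1 := by
    have := okd_tsum_rec (g := fun n => w (s n) + p n) 0
      (okd_summable_add hδ.1 hδ.2 hwc hs hp 0)
    simpa [WVal] using this
  have hW1 : w (s 0) / (1 - δ) ≤ WVal δ w s p 1 := hEIC 0
  have hδ1 : (0:ℝ) < 1 - δ := by linarith [hδ.2]
  have hlow : w (s 0) / (1 - δ) ≤ WVal δ w s p 0 := by
    rw [hrec]
    have : w (s 0) + δ * (w (s 0) / (1 - δ)) = w (s 0) / (1 - δ) := by
      field_simp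
      ring
    nlinarith [hpnn 0, hδ.1, mul_le_mul_of_nonneg_left hW1 hδ.1.le]
  linarith
/-- Canonical payments implementing a feasible knowledge sequence. -/
noncomputable def okdQ (δ : ℝ) (w : ℝ → ℝ) (s : ℕ → ℝ) : ℕ → ℝ
  | 0 => 0
  | (n + 1) => (w (s n) - w (s (n + 1))) / (1 - δ)

lemma okd_canonical {δ : ℝ} (hδ : δ ∈ Ioo (0:ℝ) 1) {π w : ℝ → ℝ}
    (hπc : ContinuousOn π (Icc 0 1)) (hwc : ContinuousOn w (Icc 0 1))
    (hwa : AntitoneOn w (Icc 0 1)) (hGm : MonotoneOn (fun x => π x + w x) (Icc 0 1))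
    {s : ℕ → ℝ} (hs : ∀ t, s t ∈ Icc (0:ℝ) 1) (hs0 : s 0 = 0) (hmono : Monotone s)
    (hN : ∀ t, (π (s (t + 1)) + w (s t)) / (1 - δ)
      ≤ ∑' k : ℕ, δ ^ k * (π (s (t + 1 + k)) + w (s (t + 1 + k)))) :
    Implementable δ π w s (okdQ δ w s) ∧
    PiVal δ π s (okdQ δ w s) 0
      = (∑' k : ℕ, δ ^ k * (π (s (0 + k)) + w (s (0 + k)))) - w (s 0) / (1 - δ) := by
  have hδ1 : (0:ℝ) < 1 - δ := by linarith [hδ.2]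
  set q := okdQ δ w s with hqdef
  -- payments nonnegative
  have hqnn : ∀ t, 0 ≤ q t := by
    intro t
    match t with
    | 0 => simp [hqdef, okdQ]
    | (n + 1) =>
      have : w (s (n + 1)) ≤ w (s n) := hwa (hs n) (hs (n + 1)) (hmono (Nat.le_succ n))
      have : 0 ≤ w (s n) - w (s (n + 1)) := by linarith
      exact div_nonneg this hδ1.le
  -- payments bounded, hence summable
  obtain ⟨C, hC⟩ := okd_bound hwc hs
  have hCnn : 0 ≤ C := le_trans (abs_nonneg _) (hC 0)
  have hqbd : ∀ n, |q n| ≤ 2 * C / (1 - δ) := by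
    intro n
    match n with
    | 0 => simp [hqdef, okdQ]; positivity
    | (m + 1) =>
      show |(w (s m) - w (s (m + 1))) / (1 - δ)| ≤ 2 * C / (1 - δ)
      rw [abs_div, abs_of_pos hδ1]
      gcongr
      calc |w (s m) - w (s (m + 1))| ≤ |w (s m)| + |w (s (m + 1))| := abs_sub _ _
        _ ≤ 2 * C := by linarith [hC m, hC (m + 1)]
  have hqsum : Summable fun t => δ ^ t * q t := okd_summable_bdd hδ.1.le hδ.2 hqbd
  -- expert's value under canonical payments
  have hW : ∀ t, WVal δ w s q (t + 1) = w (s t) / (1 - δ) := by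
    intro t
    have hfs : Summable fun k => δ ^ k * w (s (t + k)) :=
      okd_summable_comp hδ.1 hδ.2 hwc hs t
    have hkey : (fun k => δ ^ k * (w (s (t + 1 + k)) + q (t + 1 + k)))
        = fun k => (1 - δ)⁻¹ *
            ((fun j => δ ^ j * w (s (t + j))) k - (fun j => δ ^ j * w (s (t + j))) (k + 1)) := by
      funext k
      have hidx : t + 1 + k = (t + k) + 1 := by ring
      rw [hidx]
      show δ ^ k * (w (s (t + k + 1)) + (w (s (t + k)) - w (s (t + k + 1))) / (1 - δ))
        = (1 - δ)⁻¹ * (δ ^ k * w (s (t + k)) - δ ^ (k + 1) * w (s (t + (k + 1))))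
      have : t + (k + 1) = t + k + 1 := by ring
      rw [this]
      field_simp
      ring
    rw [WVal, hkey, tsum_mul_left, okd_tsum_telescope hfs]
    simp [div_eq_inv_mul]
  have hW0 : WVal δ w s q 0 = w (s 0) / (1 - δ) := by
    have hrec : WVal δ w s q 0 = (w (s 0) + q 0) + δ * WVal δ w s q 1 := by
      have := okd_tsum_rec (g := fun n => w (s n) + q n) 0
        (okd_summable_add hδ.1 hδ.2 hwc hs hqsum 0)
      simpa [WVal] using this
    have hq0 : q 0 = 0 := by simp [hqdef, okdQ]
    rw [hrec, hW 0, hq0]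
    field_simp
    ring
  have hid : ∀ t, PiVal δ π s q t + WVal δ w s q t
      = ∑' k : ℕ, δ ^ k * (π (s (t + k)) + w (s (t + k))) :=
    fun t => okd_sum_identity hδ.1 hδ.2 hπc hwc hs hqsum t
  -- P-IC
  have hPIC : ∀ t, π (s t) / (1 - δ) ≤ PiVal δ π s q t := by
    intro t
    match t with
    | 0 =>
      have h1 := hid 0
      have hgeo : ∑' k : ℕ, δ ^ k * (π (s 0) + w (s 0))
          = (1 - δ)⁻¹ * (π (s 0) + w (s 0)) := by
        rw [tsum_mul_right, tsum_geometric_of_lt_one hδ.1.le hδ.2]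
      have hle : ∑' k : ℕ, δ ^ k * (π (s 0) + w (s 0))
          ≤ ∑' k : ℕ, δ ^ k * (π (s (0 + k)) + w (s (0 + k))) := by
        apply Summable.tsum_le_tsum ?_ ?_ (okd_summable_G hδ.1 hδ.2 hπc hwc hs 0)
        · intro k
          exact mul_le_mul_of_nonneg_left
            (hGm (hs 0) (hs (0 + k)) (hmono (Nat.zero_le _))) (pow_nonneg hδ.1.le k)
        · exact (summable_geometric_of_lt_one hδ.1.le hδ.2).mul_right _
      have hsplit : (1 - δ)⁻¹ * (π (s 0) + w (s 0))
          = π (s 0) / (1 - δ) + w (s 0) / (1 - δ) := by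
        field_simp
      linarith [hW0]
    | (n + 1) =>
      have h1 := hid (n + 1)
      have h2 := hN n
      rw [add_div] at h2
      linarith [hW n]
  refine ⟨⟨⟨hs, hs0, hqsum⟩, hmono, hqnn, hPIC, fun t => le_of_eq (hW t).symm⟩, ?_⟩
  linarith [hid 0, hW0]
/-- The optimal knowledge sequence uniformly dominates any implementable one. -/
theorem optimal_uniformly_dominates
    (δ : ℝ) (hδ : δ ∈ Set.Ioo (0 : ℝ) 1) (π w : ℝ → ℝ)
    (hπc : ContinuousOn π (Set.Icc 0 1)) (hwc : ContinuousOn w (Set.Icc 0 1))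
    (hπm : StrictMonoOn π (Set.Icc 0 1)) (hwa : StrictAntiOn w (Set.Icc 0 1))
    (hGm : StrictMonoOn (fun x => π x + w x) (Set.Icc 0 1))
    (s p sStar pStar : ℕ → ℝ)
    (himp : Implementable δ π w s p) (hopt : Optimal δ π w sStar pStar) :
    ∀ t, s t ≤ sStar t := by
  intro T
  by_contra hcon
  push_neg at hcon
  have hδ1 : (0:ℝ) < 1 - δ := by linarith [hδ.2]
  have hwa' : AntitoneOn w (Icc 0 1) := hwa.antitoneOn
  have hGm' : MonotoneOn (fun x => π x + w x) (Icc 0 1) := hGm.monotoneOn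
  obtain ⟨⟨hs, hs0, hp⟩, hmono, hpnn, hPIC, hEIC⟩ := himp
  obtain ⟨himpS, hoptS⟩ := hopt
  obtain ⟨⟨hsS, hsS0, hpS⟩, hmonoS, hpnnS, hPICS, hEICS⟩ := himpS
  -- the max sequence
  set m : ℕ → ℝ := fun n => max (s n) (sStar n) with hmdef
  have hm : ∀ t, m t ∈ Icc (0:ℝ) 1 := fun t =>
    ⟨le_max_of_le_left (hs t).1, max_le (hs t).2 (hsS t).2⟩
  have hm0 : m 0 = 0 := by simp [hmdef, hs0, hsS0]
  have hmmono : Monotone m := hmono.max hmonoS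
  have hsm : ∀ t, s t ≤ m t := fun t => le_max_left _ _
  have hsSm : ∀ t, sStar t ≤ m t := fun t => le_max_right _ _
  -- N-condition for the max sequence
  have hNs := okd_necessary hδ hπc hwc
    ⟨⟨hs, hs0, hp⟩, hmono, hpnn, hPIC, hEIC⟩
  have hNsS := okd_necessary hδ hπc hwc
    ⟨⟨hsS, hsS0, hpS⟩, hmonoS, hpnnS, hPICS, hEICS⟩
  have hsumm : ∀ (u : ℕ → ℝ), (∀ t, u t ∈ Icc (0:ℝ) 1) → ∀ t,
      Summable fun k => δ ^ k * (π (u (t + k)) + w (u (t + k))) :=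
    fun u hu t => okd_summable_G hδ.1 hδ.2 hπc hwc hu t
  have htsum_le : ∀ (u : ℕ → ℝ), (∀ t, u t ∈ Icc (0:ℝ) 1) → (∀ n, u n ≤ m n) → ∀ t,
      (∑' k : ℕ, δ ^ k * (π (u (t + k)) + w (u (t + k))))
        ≤ ∑' k : ℕ, δ ^ k * (π (m (t + k)) + w (m (t + k))) := by
    intro u hu hum t
    apply Summable.tsum_le_tsum ?_ (hsumm u hu t) (hsumm m hm t)
    intro k
    exact mul_le_mul_of_nonneg_left
      (hGm' (hu (t + k)) (hm (t + k)) (hum (t + k))) (pow_nonneg hδ.1.le k)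
  have hNm : ∀ t, (π (m (t + 1)) + w (m t)) / (1 - δ)
      ≤ ∑' k : ℕ, δ ^ k * (π (m (t + 1 + k)) + w (m (t + 1 + k))) := by
    intro t
    rcases max_choice (s (t + 1)) (sStar (t + 1)) with hmax | hmax
    · have hmt : m (t + 1) = s (t + 1) := hmax
      have hwle : w (m t) ≤ w (s t) := hwa' (hs t) (hm t) (hsm t)
      have h1 : (π (m (t + 1)) + w (m t)) / (1 - δ)
          ≤ (π (s (t + 1)) + w (s t)) / (1 - δ) := by
        rw [hmt]; gcongr
      exact h1.trans ((hNs t).trans (htsum_le s hs hsm (t + 1)))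
    · have hmt : m (t + 1) = sStar (t + 1) := hmax
      have hwle : w (m t) ≤ w (sStar t) := hwa' (hsS t) (hm t) (hsSm t)
      have h1 : (π (m (t + 1)) + w (m t)) / (1 - δ)
          ≤ (π (sStar (t + 1)) + w (sStar t)) / (1 - δ) := by
        rw [hmt]; gcongr
      exact h1.trans ((hNsS t).trans (htsum_le sStar hsS hsSm (t + 1)))
  -- implement the max sequence with canonical payments
  obtain ⟨himpM, hvalM⟩ := okd_canonical hδ hπc hwc hwa' hGm' hm hm0 hmmono hNm
  -- optimality chain
  have hub := okd_upper hδ hπc hwc ⟨⟨hsS, hsS0, hpS⟩, hmonoS, hpnnS, hPICS, hEICS⟩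
  have hoptle := hoptS m (okdQ δ w m) himpM
  -- strict inequality between the G-sums
  have hstrict : (∑' k : ℕ, δ ^ k * (π (sStar (0 + k)) + w (sStar (0 + k))))
      < ∑' k : ℕ, δ ^ k * (π (m (0 + k)) + w (m (0 + k))) := by
    apply Summable.tsum_lt_tsum (i := T) ?_ ?_ (hsumm sStar hsS 0) (hsumm m hm 0)
    · intro k
      exact mul_le_mul_of_nonneg_left
        (hGm' (hsS (0 + k)) (hm (0 + k)) (hsSm (0 + k))) (pow_nonneg hδ.1.le k)
    · have hlt : sStar (0 + T) < m (0 + T) := by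
        simpa [hmdef] using lt_of_lt_of_le hcon (hsm T)
      exact mul_lt_mul_of_pos_left
        (hGm (hsS (0 + T)) (hm (0 + T)) hlt) (pow_pos hδ.1 T)
  rw [hvalM] at hoptle
  rw [hm0] at hoptle
  rw [← hsS0] at hoptle
  linarith
end
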